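/- arXiv:1112.1545 — 10 statements merged into one kernel-verified Lean document; each statement's English description precedes it below -/
import Mathlib

section
/- Every tournament on 5 vertices, except the regular tournament T5 (in which every vertex has out-degree and in-degree exactly 2), contains a copy of the antidirected path p4 of length 4. -/
def encP4 (i j : Fin 5) : Fin 10 :=
  ⟨min 9 (i.val * (9 - i.val) / 2 + (j.val - i.val - 1)), by omega⟩

def decP4 : Fin 10 → Fin 5 × Fin 5 :=
  ![(0,1),(0,2),(0,3),(0,4),(1,2),(1,3),(1,4),(2,3),(2,4),(3,4)]

def FP4 (g : Fin 10 → Bool) (i j : Fin 5) : Bool :=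
  if i = j then false else if i < j then g (encP4 i j) else !(g (encP4 j i))

lemma decP4_encP4 : ∀ i j : Fin 5, i < j → decP4 (encP4 i j) = (i, j) := by decide

def hasP4b (g : Fin 10 → Bool) : Bool :=
  (List.finRange 5).any fun y =>
  (List.finRange 5).any fun x =>
    ((x != y) && FP4 g y x) &&
    ((List.finRange 5).any fun z =>
      ((z != x) && (z != y) && FP4 g y z) &&
      ((List.finRange 5).any fun v =>
        ((v != x) && (v != y) && (v != z) && FP4 g v z) &&
        ((List.finRange 5).any fun w =>
          (w != x) && (w != y) && (w != z) && (w != v) && FP4 g v w)))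

def regb (g : Fin 10 → Bool) : Bool :=
  (List.finRange 5).all fun i =>
    ((List.finRange 5).countP (fun j => FP4 g i j) == 2) &&
    ((List.finRange 5).countP (fun j => FP4 g j i) == 2)

set_option maxHeartbeats 4000000 in
set_option maxRecDepth 4000 in
lemma chk_all' : ∀ b0 b1 b2 b3 b4 b5 b6 b7 b8 b9 : Bool,
    (hasP4b ![b0,b1,b2,b3,b4,b5,b6,b7,b8,b9] || regb ![b0,b1,b2,b3,b4,b5,b6,b7,b8,b9]) = true := by
  decide

lemma chk_all (g : Fin 10 → Bool) : (hasP4b g || regb g) = true := by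
  have h : g = ![g 0, g 1, g 2, g 3, g 4, g 5, g 6, g 7, g 8, g 9] := by
    funext k; fin_cases k <;> rfl
  rw [h]; exact chk_all' _ _ _ _ _ _ _ _ _ _

lemma countP_eq_card (p : Fin 5 → Bool) :
    (List.finRange 5).countP p = (Finset.univ.filter (fun j => p j = true)).card := by
  have h : ∀ q : Fin 5 → Bool,
      (List.finRange 5).countP q = (Finset.univ.filter (fun j => q j = true)).card := by decide
  exact h p

lemma hasP4b_spec (g : Fin 10 → Bool) (h : hasP4b g = true) :
    ∃ x y z v w : Fin 5,
      x ≠ y ∧ x ≠ z ∧ x ≠ v ∧ x ≠ w ∧ y ≠ z ∧ y ≠ v ∧ y ≠ w ∧ z ≠ v ∧ z ≠ w ∧ v ≠ w ∧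
      FP4 g y x = true ∧ FP4 g y z = true ∧ FP4 g v z = true ∧ FP4 g v w = true := by
  simp only [hasP4b, List.any_eq_true, List.mem_finRange, true_and, Bool.and_eq_true,
    bne_iff_ne, ne_eq] at h
  obtain ⟨y, x, ⟨hxy, h1⟩, z, ⟨⟨hzx, hzy⟩, h2⟩, v, ⟨⟨⟨hvx, hvy⟩, hvz⟩, h3⟩,
    w, ⟨⟨⟨hwx, hwy⟩, hwz⟩, hwv⟩, h4⟩ := h
  exact ⟨x, y, z, v, w, hxy, fun e => hzx e.symm, fun e => hvx e.symm,
    fun e => hwx e.symm, fun e => hzy e.symm, fun e => hvy e.symm, fun e => hwy e.symm,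
    fun e => hvz e.symm, fun e => hwz e.symm, fun e => hwv e.symm, h1, h2, h3, h4⟩

lemma regb_spec (g : Fin 10 → Bool) (h : regb g = true) (i : Fin 5) :
    (Finset.univ.filter (fun j => FP4 g i j = true)).card = 2 ∧
    (Finset.univ.filter (fun j => FP4 g j i = true)).card = 2 := by
  simp only [regb, List.all_eq_true, List.mem_finRange, true_implies, Bool.and_eq_true,
    beq_iff_eq] at h
  obtain ⟨h1, h2⟩ := h i
  rw [countP_eq_card] at h1 h2
  exact ⟨h1, h2⟩

/-- The underlying simple graph of a digraph given as a relation. -/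
def underlyingGraph {V : Type*} (D : V → V → Prop) : SimpleGraph V where
  Adj a b := a ≠ b ∧ (D a b ∨ D b a)
  symm := ⟨fun _ _ h => ⟨h.1.symm, h.2.symm⟩⟩
  loopless := ⟨fun _ h => h.1 rfl⟩

/-- `D` contains a copy of the antidirected path `p4`:
vertices x,y,z,v,w with arcs (y,x),(y,z),(v,z),(v,w). -/
def HasP4 {V : Type*} (D : V → V → Prop) : Prop :=
  ∃ x y z v w : V,
    x ≠ y ∧ x ≠ z ∧ x ≠ v ∧ x ≠ w ∧ y ≠ z ∧ y ≠ v ∧ y ≠ w ∧ z ≠ v ∧ z ≠ w ∧ v ≠ w ∧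
    D y x ∧ D y z ∧ D v z ∧ D v w

/-- Every 5-tournament which is not the regular tournament `T5` (in which every
vertex has out-degree and in-degree exactly 2) contains a copy of `p4`. -/
theorem stmt_0 {V : Type*} [Fintype V] (D : V → V → Prop)
    (hcard : Fintype.card V = 5)
    (hirr : ∀ a, ¬ D a a)
    (htour : ∀ a b : V, a ≠ b → (D a b ↔ ¬ D b a))
    (hnotT5 : ¬ ∀ v : V, {w | D v w}.ncard = 2 ∧ {w | D w v}.ncard = 2) :
    HasP4 D := by
  classical
  let e : V ≃ Fin 5 := Fintype.equivFinOfCardEq hcard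
  let f0 : Fin 5 → Fin 5 → Bool := fun i j => decide (D (e.symm i) (e.symm j))
  let g : Fin 10 → Bool := fun k => f0 (decP4 k).1 (decP4 k).2
  have hF : ∀ i j : Fin 5, (FP4 g i j = true ↔ D (e.symm i) (e.symm j)) := by
    intro i j
    by_cases hij : i = j
    · subst hij
      simp only [FP4, if_pos rfl]
      simp [hirr (e.symm i)]
    have hne : e.symm i ≠ e.symm j := fun h => hij (e.symm.injective h)
    rcases lt_or_gt_of_ne hij with h | h
    · have : FP4 g i j = f0 i j := by
        simp only [FP4, if_neg hij, if_pos h, g, decP4_encP4 i j h]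
      rw [this]; simp [f0]
    · have hnlt : ¬ i < j := not_lt_of_gt h
      have hji : j ≠ i := fun e' => hij e'.symm
      have : FP4 g i j = !(f0 j i) := by
        simp only [FP4, if_neg hij, if_neg hnlt, g, decP4_encP4 j i h]
      rw [this]
      simp only [Bool.not_eq_true', f0, decide_eq_false_iff_not]
      rw [htour _ _ hne]
  rcases Bool.or_eq_true _ _ |>.mp (chk_all g) with h | h
  · obtain ⟨x, y, z, v, w, d1, d2, d3, d4, d5, d6, d7, d8, d9, d10, a1, a2, a3, a4⟩ :=
      hasP4b_spec g h
    exact ⟨e.symm x, e.symm y, e.symm z, e.symm v, e.symm w,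
      fun h' => d1 (e.symm.injective h'), fun h' => d2 (e.symm.injective h'),
      fun h' => d3 (e.symm.injective h'), fun h' => d4 (e.symm.injective h'),
      fun h' => d5 (e.symm.injective h'), fun h' => d6 (e.symm.injective h'),
      fun h' => d7 (e.symm.injective h'), fun h' => d8 (e.symm.injective h'),
      fun h' => d9 (e.symm.injective h'), fun h' => d10 (e.symm.injective h'),
      (hF _ _).mp a1, (hF _ _).mp a2, (hF _ _).mp a3, (hF _ _).mp a4⟩
  · exfalso; apply hnotT5
    intro a
    obtain ⟨h1, h2⟩ := regb_spec g h (e a)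
    have key : ∀ (S : Set (Fin 5)) (T : Set V), (∀ u : V, u ∈ T ↔ e u ∈ S) →
        T.ncard = S.ncard := by
      intro S T hTS
      have : T = e.symm '' S := by
        ext u
        rw [hTS u]
        constructor
        · intro hu; exact ⟨e u, hu, e.symm_apply_apply u⟩
        · rintro ⟨j, hj, rfl⟩; simpa using hj
      rw [this, Set.ncard_image_of_injective _ e.symm.injective]
    have hs1 : {w | D a w}.ncard = 2 := by
      rw [key {j | FP4 g (e a) j = true} _ ?_]
      · rw [Set.ncard_eq_toFinset_card']
        simp only [Set.toFinset_setOf]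
        exact h1
      · intro u
        simp only [Set.mem_setOf_eq]
        rw [hF (e a) (e u)]
        simp
    have hs2 : {w | D w a}.ncard = 2 := by
      rw [key {j | FP4 g j (e a) = true} _ ?_]
      · rw [Set.ncard_eq_toFinset_card']
        simp only [Set.toFinset_setOf]
        exact h2
      · intro u
        simp only [Set.mem_setOf_eq]
        rw [hF (e u) (e a)]
        simp
    exact ⟨hs1, hs2⟩
end

section
/- If D is a digraph which does not contain a tournament of order 2n+1 (for n ≥ 2) as a subdigraph, and every vertex of D has in-degree at most n, then the chromatic number of the underlying graph of D is at most 2n. -/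
namespace BrooksAux

open scoped Classical

variable {V : Type*} {G : SimpleGraph V}

/-- one step inside a set -/
def Step (G : SimpleGraph V) (A : Set V) (u v : V) : Prop := u ∈ A ∧ v ∈ A ∧ G.Adj u v

/-- reachability inside a set -/
def Reach (G : SimpleGraph V) (A : Set V) : V → V → Prop := Relation.ReflTransGen (Step G A)

/-- connected component of `a` inside `A` -/
def comp (G : SimpleGraph V) (A : Set V) (a : V) : Set V := {z | z ∈ A ∧ Reach G A a z}

lemma step_symm {A : Set V} : Symmetric (Step G A) := fun _ _ h => ⟨h.2.1, h.1, h.2.2.symm⟩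

lemma reach_symm {A : Set V} {u v : V} (h : Reach G A u v) : Reach G A v u :=
  haveI : Std.Symm (Step G A) := ⟨fun _ _ hs => step_symm hs⟩
  Std.Symm.symm (r := Relation.ReflTransGen (Step G A)) _ _ h

lemma reach_trans {A : Set V} {u v w : V} (h : Reach G A u v) (h' : Reach G A v w) :
    Reach G A u w := h.trans h'

lemma reach_mono {A B : Set V} (hAB : A ⊆ B) {u v : V} (h : Reach G A u v) : Reach G B u v :=
  Relation.ReflTransGen.mono (r := Step G A) (p := Step G B)
    (fun a b (hs : Step G A a b) => (⟨hAB hs.1, hAB hs.2.1, hs.2.2⟩ : Step G B a b)) _ _ h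

lemma mem_comp_self {A : Set V} {a : V} (ha : a ∈ A) : a ∈ comp G A a :=
  ⟨ha, Relation.ReflTransGen.refl⟩

lemma comp_subset {A : Set V} {a : V} : comp G A a ⊆ A := fun _ hz => hz.1

lemma reach_of_mem_comp {A : Set V} {a z : V} (hz : z ∈ comp G A a) : Reach G A a z := hz.2

lemma adj_mem_comp {A : Set V} {a z w : V} (hz : z ∈ comp G A a) (hw : w ∈ A)
    (hadj : G.Adj z w) : w ∈ comp G A a :=
  ⟨hw, hz.2.tail ⟨hz.1, hw, hadj⟩⟩

lemma comp_eq_of_mem {A : Set V} {a z : V} (hz : z ∈ comp G A a) :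
    comp G A z = comp G A a := by
  ext w
  constructor
  · rintro ⟨hwA, hr⟩
    exact ⟨hwA, reach_trans hz.2 hr⟩
  · rintro ⟨hwA, hr⟩
    exact ⟨hwA, reach_trans (reach_symm hz.2) hr⟩

/-- if `T` is closed under adjacency within `A`, reachability in `A` stays in `T` -/
lemma closed_reach {A T : Set V} (hcl : ∀ z ∈ T, ∀ w ∈ A, G.Adj z w → w ∈ T)
    {u v : V} (hu : u ∈ T) (h : Reach G A u v) : v ∈ T := by
  induction h with
  | refl => exact hu
  | tail _ hst ih => exact hcl _ ih _ hst.2.1 hst.2.2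

/-- the component is internally connected -/
lemma reach_comp {A : Set V} {a z : V} (ha : a ∈ A) (hz : z ∈ comp G A a) :
    Reach G (comp G A a) a z := by
  obtain ⟨hzA, hr⟩ := hz
  clear hzA
  induction hr with
  | refl => exact Relation.ReflTransGen.refl
  | @tail b c hab hbc ih =>
    have hb : b ∈ comp G A a := ⟨hbc.1, hab⟩
    have hc : c ∈ comp G A a := ⟨hbc.2.1, hab.tail hbc⟩
    exact ih.tail ⟨hb, hc, hbc.2.2⟩


variable [Fintype V]

lemma mem_diff_pair {S : Set V} {p q z : V} : z ∈ S \ {p, q} ↔ z ∈ S ∧ z ≠ p ∧ z ≠ q := by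
  simp [not_or, and_assoc]

lemma mem_diff_one {S : Set V} {p z : V} : z ∈ S \ {p} ↔ z ∈ S ∧ z ≠ p := by simp

/-- every vertex of `S \ {a,b}` reaches `x` or `y`, provided `{x,y}` separates `a` from `b`
and `S` has no cutvertex -/
lemma claim1 {S : Set V}
    (hnocut : ∀ s ∈ S, ∀ u ∈ S \ {s}, ∀ v ∈ S \ {s}, Reach G (S \ {s}) u v)
    {a b x y : V} (ha : a ∈ S) (hb : b ∈ S) (hx : x ∈ S)
    (hax : a ≠ x) (hay : a ≠ y) (hbx : b ≠ x) (hby : b ≠ y)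
    (hbC : b ∉ comp G (S \ {x, y}) a)
    {z : V} (hz : z ∈ S \ {a, b}) :
    z ∈ comp G (S \ {a, b}) x ∨ z ∈ comp G (S \ {a, b}) y := by
  obtain ⟨hzS, hza, hzb⟩ := mem_diff_pair.mp hz
  by_cases hxK : x ∈ comp G (S \ {a, b}) z
  · exact Or.inl ((comp_eq_of_mem hxK) ▸ mem_comp_self hz)
  by_cases hyK : y ∈ comp G (S \ {a, b}) z
  · exact Or.inr ((comp_eq_of_mem hyK) ▸ mem_comp_self hz)
  exfalso
  set K := comp G (S \ {a, b}) z with hK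
  -- K sits inside the component C of z in S \ {x,y}
  have hzxy : z ∈ S \ {x, y} := by
    refine mem_diff_pair.mpr ⟨hzS, ?_, ?_⟩
    · rintro rfl; exact hxK (mem_comp_self hz)
    · rintro rfl; exact hyK (mem_comp_self hz)
  set C := comp G (S \ {x, y}) z with hC
  have hKsubset : K ⊆ S \ {x, y} := by
    intro w hw
    refine mem_diff_pair.mpr ⟨(comp_subset hw).1, ?_, ?_⟩
    · rintro rfl; exact hxK hw
    · rintro rfl; exact hyK hw
  have hKC : K ⊆ C := by
    intro w hw
    exact ⟨hKsubset hw, reach_mono hKsubset (reach_comp hz hw)⟩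
  have hnotboth : ¬ (a ∈ C ∧ b ∈ C) := by
    rintro ⟨haC, hbC'⟩
    exact hbC ((comp_eq_of_mem haC) ▸ hbC')
  -- closure + no-cutvertex contradiction
  have key : ∀ s t : V, s ∈ S → (∀ w : V, (w = a ∨ w = b) ↔ (w = s ∨ w = t)) → t ∉ C →
      False := by
    intro s t hsS hmem htC
    have ht_ab : t = a ∨ t = b := (hmem t).mpr (Or.inr rfl)
    have htx : t ≠ x := by rcases ht_ab with rfl | rfl; exacts [hax, hbx]
    have hty : t ≠ y := by rcases ht_ab with rfl | rfl; exacts [hay, hby]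
    have htS : t ∈ S := by rcases ht_ab with rfl | rfl; exacts [ha, hb]
    -- K is closed in S \ {s}
    have hcl : ∀ z' ∈ K, ∀ w ∈ S \ {s}, G.Adj z' w → w ∈ K := by
      intro z' hz' w hw hadj
      obtain ⟨hwS, hws⟩ := mem_diff_one.mp hw
      by_cases hwab : w = a ∨ w = b
      · have hwt : w = t := by
          rcases (hmem w).mp hwab with h | h
          · exact absurd h hws
          · exact h
        subst hwt
        exact absurd (adj_mem_comp (hKC hz') (mem_diff_pair.mpr ⟨hwS, htx, hty⟩) hadj) htC
      · push_neg at hwab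
        exact adj_mem_comp hz' (mem_diff_pair.mpr ⟨hwS, hwab.1, hwab.2⟩) hadj
    have hzs : z ∈ S \ {s} := by
      refine mem_diff_one.mpr ⟨hzS, fun h => ?_⟩
      rcases (hmem z).mpr (Or.inl h) with h' | h'
      · exact hza h'
      · exact hzb h'
    have hxs : x ∈ S \ {s} := by
      refine mem_diff_one.mpr ⟨hx, fun h => ?_⟩
      rcases (hmem x).mpr (Or.inl h) with h' | h'
      · exact hax h'.symm
      · exact hbx h'.symm
    exact hxK (closed_reach hcl (mem_comp_self hz) (hnocut _ hsS _ hzs _ hxs))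
  by_cases haC : a ∈ C
  ·
    -- here a ∈ C so pick t := b (b ∉ C), s := a
    have hbC' : b ∉ C := fun h => hnotboth ⟨haC, h⟩
    exact key a b ha (fun w => Iff.rfl) hbC'
  · exact key b a hb (fun w => or_comm) haC

lemma notmem_single {u v : V} (h : u ≠ v) : u ∉ ({v} : Set V) :=
  fun h' => h (Set.mem_singleton_iff.mp h')

lemma ne_of_notmem_single {u v : V} (h : u ∉ ({v} : Set V)) : u ≠ v :=
  fun h' => h (Set.mem_singleton_iff.mpr h')

/-- the descent lemma: from a separating configuration we can find a good triple -/
lemma lemB {S : Set V}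
    (hnocut : ∀ s ∈ S, ∀ u ∈ S \ {s}, ∀ v ∈ S \ {s}, Reach G (S \ {s}) u v)
    (hdeg3 : ∀ z ∈ S, ∀ p q : V, ∃ w ∈ S, G.Adj z w ∧ w ≠ p ∧ w ≠ q) :
    ∀ m : ℕ, ∀ x y a b : V, (comp G (S \ {x, y}) a).ncard = m →
      x ∈ S → y ∈ S → x ≠ y → a ∈ S → b ∈ S → a ≠ y → b ≠ y →
      G.Adj x a → G.Adj x b → b ∉ comp G (S \ {x, y}) a →
      ∃ v a' b', v ∈ S ∧ a' ∈ S ∧ b' ∈ S ∧ G.Adj v a' ∧ G.Adj v b' ∧ ¬ G.Adj a' b' ∧ a' ≠ b' ∧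
        ∀ u ∈ S \ {a', b'}, ∀ w ∈ S \ {a', b'}, Reach G (S \ {a', b'}) u w := by
  intro m
  induction m using Nat.strong_induction_on with
  | _ m IH =>
  intro x y a b hm hx hy hxy ha hb hay hby hxa hxb hbC
  have hax : a ≠ x := hxa.ne.symm
  have hbx : b ≠ x := hxb.ne.symm
  set CA := comp G (S \ {x, y}) a with hCAdef
  have haxy : a ∈ S \ {x, y} := mem_diff_pair.mpr ⟨ha, hax, hay⟩
  have haCA : a ∈ CA := mem_comp_self haxy
  have hnadj : ¬ G.Adj a b :=
    fun h => hbC (adj_mem_comp haCA (mem_diff_pair.mpr ⟨hb, hbx, hby⟩) h)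
  have hab : a ≠ b := fun h => hbC (h ▸ haCA)
  set X := comp G (S \ {a, b}) x with hXdef
  set Y := comp G (S \ {a, b}) y with hYdef
  have hxab : x ∈ S \ {a, b} := mem_diff_pair.mpr ⟨hx, hax.symm, hbx.symm⟩
  have hyab : y ∈ S \ {a, b} := mem_diff_pair.mpr ⟨hy, hay.symm, hby.symm⟩
  by_cases hgood : y ∈ X
  · refine ⟨x, a, b, hx, ha, hb, hxa, hxb, hnadj, hab, ?_⟩
    intro u hu w hw
    have hXY : Y = X := comp_eq_of_mem hgood
    have hu' : u ∈ X := by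
      rcases claim1 hnocut ha hb hx hax hay hbx hby hbC hu with h | h
      · exact h
      · rw [← hXY]; exact h
    have hw' : w ∈ X := by
      rcases claim1 hnocut ha hb hx hax hay hbx hby hbC hw with h | h
      · exact h
      · rw [← hXY]; exact h
    exact reach_trans (reach_symm (reach_of_mem_comp hu')) (reach_of_mem_comp hw')
  · -- the bad case: y not reachable from x after deleting a,b
    have hxY : x ∉ Y := by
      intro hxY
      have hXY : X = Y := comp_eq_of_mem hxY
      have hyY : y ∈ Y := mem_comp_self hyab
      rw [← hXY] at hyY
      exact hgood hyY
    have haX : a ∉ X := fun h => (mem_diff_pair.mp (comp_subset h)).2.1 rfl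
    have haY : a ∉ Y := fun h => (mem_diff_pair.mp (comp_subset h)).2.1 rfl
    set Q11 := (X \ {x}) ∩ CA with hQ11def
    set Q12 := (Y \ {y}) ∩ CA with hQ12def
    have haQ11 : a ∉ Q11 := fun h => haX h.1.1
    have haQ12 : a ∉ Q12 := fun h => haY h.1.1
    have hQ11cl : ∀ z ∈ Q11, ∀ w ∈ S, G.Adj z w → w ∈ Q11 ∨ w = x ∨ w = a := by
      rintro z ⟨⟨hzX, hzx⟩, hzCA⟩ w hwS hadj
      by_cases hwx : w = x
      · exact Or.inr (Or.inl hwx)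
      by_cases hwa : w = a
      · exact Or.inr (Or.inr hwa)
      by_cases hwb : w = b
      · subst hwb
        exact absurd (adj_mem_comp hzCA (mem_diff_pair.mpr ⟨hwS, hbx, hby⟩) hadj) hbC
      · have hwab : w ∈ S \ {a, b} := mem_diff_pair.mpr ⟨hwS, hwa, hwb⟩
        have hwX : w ∈ X := adj_mem_comp hzX hwab hadj
        have hwy : w ≠ y := fun h => hgood (h ▸ hwX)
        have hwCA : w ∈ CA := adj_mem_comp hzCA (mem_diff_pair.mpr ⟨hwS, hwx, hwy⟩) hadj
        exact Or.inl ⟨⟨hwX, notmem_single hwx⟩, hwCA⟩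
    have hQ12cl : ∀ z ∈ Q12, ∀ w ∈ S, G.Adj z w → w ∈ Q12 ∨ w = y ∨ w = a := by
      rintro z ⟨⟨hzY, hzy⟩, hzCA⟩ w hwS hadj
      by_cases hwy : w = y
      · exact Or.inr (Or.inl hwy)
      by_cases hwa : w = a
      · exact Or.inr (Or.inr hwa)
      by_cases hwb : w = b
      · subst hwb
        exact absurd (adj_mem_comp hzCA (mem_diff_pair.mpr ⟨hwS, hbx, hby⟩) hadj) hbC
      · have hwab : w ∈ S \ {a, b} := mem_diff_pair.mpr ⟨hwS, hwa, hwb⟩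
        have hwY : w ∈ Y := adj_mem_comp hzY hwab hadj
        have hwx : w ≠ x := fun h => hxY (h ▸ hwY)
        have hwCA : w ∈ CA := adj_mem_comp hzCA (mem_diff_pair.mpr ⟨hwS, hwx, hwy⟩) hadj
        exact Or.inl ⟨⟨hwY, notmem_single hwy⟩, hwCA⟩
    have hsub : ∀ (Q : Set V) (p q z₀ : V),
        (∀ z ∈ Q, ∀ w ∈ S, G.Adj z w → w ∈ Q ∨ w = p ∨ w = q) → z₀ ∈ Q →
        comp G (S \ {p, q}) z₀ ⊆ Q := by
      intro Q p q z₀ hcl hz₀ w hw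
      refine closed_reach (A := S \ {p, q}) (T := Q) ?_ hz₀ (reach_of_mem_comp hw)
      intro z hz w' hw' hadj
      obtain ⟨hw'S, hw'p, hw'q⟩ := mem_diff_pair.mp hw'
      rcases hcl z hz w' hw'S hadj with h | h | h
      · exact h
      · exact absurd h hw'p
      · exact absurd h hw'q
    by_cases hQ11ne : Q11.Nonempty
    · obtain ⟨z₀, hz₀⟩ := hQ11ne
      have hz₀S : z₀ ∈ S := (mem_diff_pair.mp (comp_subset hz₀.2)).1
      have hz₀x : z₀ ≠ x := ne_of_notmem_single hz₀.1.2
      have hz₀a : z₀ ≠ a := fun h => haQ11 (h ▸ hz₀)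
      set K₀ := comp G (S \ {x, a}) z₀ with hK₀def
      have hK₀sub : K₀ ⊆ Q11 := hsub Q11 x a z₀ hQ11cl hz₀
      have hz₀K : z₀ ∈ K₀ := mem_comp_self (mem_diff_pair.mpr ⟨hz₀S, hz₀x, hz₀a⟩)
      have hxadj : ∃ w ∈ K₀, G.Adj x w := by
        by_contra hno
        push_neg at hno
        have hcl : ∀ z' ∈ K₀, ∀ w ∈ S \ {a}, G.Adj z' w → w ∈ K₀ := by
          intro z' hz' w hw hadj
          obtain ⟨hwS, hwa⟩ := mem_diff_one.mp hw
          rcases hQ11cl z' (hK₀sub hz') w hwS hadj with h | h | h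
          · have hwx : w ≠ x := ne_of_notmem_single h.1.2
            exact adj_mem_comp hz' (mem_diff_pair.mpr ⟨hwS, hwx, hwa⟩) hadj
          · subst h; exact absurd hadj.symm (hno z' hz')
          · exact absurd h hwa
        have hreach := hnocut a ha z₀ (mem_diff_one.mpr ⟨hz₀S, hz₀a⟩) x
          (mem_diff_one.mpr ⟨hx, hax.symm⟩)
        have hxK₀ : x ∈ K₀ := closed_reach hcl hz₀K hreach
        exact (ne_of_notmem_single (hK₀sub hxK₀).1.2) rfl
      obtain ⟨w, hwK₀, hxw⟩ := hxadj
      have hwQ11 : w ∈ Q11 := hK₀sub hwK₀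
      have hwS : w ∈ S := (mem_diff_pair.mp (comp_subset hwQ11.2)).1
      have hcompw : comp G (S \ {x, a}) w = K₀ := comp_eq_of_mem hwK₀
      have hlt : (comp G (S \ {x, a}) w).ncard < m := by
        rw [hcompw, ← hm]
        refine Set.ncard_lt_ncard ?_ (Set.toFinite _)
        refine (Set.ssubset_iff_of_subset (fun u hu => (hK₀sub hu).2)).mpr
          ⟨a, haCA, fun h => haQ11 (hK₀sub h)⟩
      have hwa : w ≠ a := fun h => haQ11 (h ▸ hwQ11)
      have hba : b ≠ a := hab.symm
      have hbK : b ∉ comp G (S \ {x, a}) w := by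
        rw [hcompw]
        exact fun h => hbC (hK₀sub h).2
      exact IH _ hlt x a w b rfl hx ha hxa.ne hwS hb hwa hba hxw hxb hbK
    by_cases hQ12ne : Q12.Nonempty
    · obtain ⟨z₁, hz₁⟩ := hQ12ne
      have hz₁S : z₁ ∈ S := (mem_diff_pair.mp (comp_subset hz₁.2)).1
      have hz₁y : z₁ ≠ y := ne_of_notmem_single hz₁.1.2
      have hz₁a : z₁ ≠ a := fun h => haQ12 (h ▸ hz₁)
      set K := comp G (S \ {y, a}) z₁ with hKdef
      have hKsub : K ⊆ Q12 := hsub Q12 y a z₁ hQ12cl hz₁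
      have hz₁K : z₁ ∈ K := mem_comp_self (mem_diff_pair.mpr ⟨hz₁S, hz₁y, hz₁a⟩)
      have hyadj : ∃ w ∈ K, G.Adj y w := by
        by_contra hno
        push_neg at hno
        have hcl : ∀ z' ∈ K, ∀ w ∈ S \ {a}, G.Adj z' w → w ∈ K := by
          intro z' hz' w hw hadj
          obtain ⟨hwS', hwa⟩ := mem_diff_one.mp hw
          rcases hQ12cl z' (hKsub hz') w hwS' hadj with h | h | h
          · have hwy : w ≠ y := ne_of_notmem_single h.1.2
            exact adj_mem_comp hz' (mem_diff_pair.mpr ⟨hwS', hwy, hwa⟩) hadj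
          · subst h; exact absurd hadj.symm (hno z' hz')
          · exact absurd h hwa
        have hreach := hnocut a ha z₁ (mem_diff_one.mpr ⟨hz₁S, hz₁a⟩) x
          (mem_diff_one.mpr ⟨hx, hax.symm⟩)
        have hxK : x ∈ K := closed_reach hcl hz₁K hreach
        exact hxY (hKsub hxK).1.1
      obtain ⟨w', hw'K, hyw'⟩ := hyadj
      have hw'Q12 : w' ∈ Q12 := hKsub hw'K
      have hw'S : w' ∈ S := (mem_diff_pair.mp (comp_subset hw'Q12.2)).1
      have hcompw' : comp G (S \ {y, a}) w' = K := comp_eq_of_mem hw'K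
      have hb' : ∃ w'' ∈ S, G.Adj y w'' ∧ w'' ∉ K ∧ w'' ≠ a := by
        by_contra hno
        push_neg at hno
        have hcl : ∀ z' ∈ K ∪ {y}, ∀ w ∈ S \ {a}, G.Adj z' w → w ∈ K ∪ {y} := by
          intro z' hz' w hw hadj
          obtain ⟨hwS', hwa⟩ := mem_diff_one.mp hw
          rcases hz' with hz' | hz'
          · rcases hQ12cl z' (hKsub hz') w hwS' hadj with h | h | h
            · have hwy : w ≠ y := ne_of_notmem_single h.1.2
              exact Or.inl (adj_mem_comp hz' (mem_diff_pair.mpr ⟨hwS', hwy, hwa⟩) hadj)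
            · exact Or.inr (Set.mem_singleton_iff.mpr h)
            · exact absurd h hwa
          · have hz'y : z' = y := Set.mem_singleton_iff.mp hz'
            subst hz'y
            by_cases hwK : w ∈ K
            · exact Or.inl hwK
            · exact absurd (hno w hwS' hadj hwK) hwa
        have hreach := hnocut a ha y (mem_diff_one.mpr ⟨hy, hay.symm⟩) x
          (mem_diff_one.mpr ⟨hx, hax.symm⟩)
        have hxT : x ∈ K ∪ {y} := closed_reach hcl (Or.inr rfl) hreach
        rcases hxT with h | h
        · exact hxY (hKsub h).1.1
        · exact hxy (Set.mem_singleton_iff.mp h)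
      obtain ⟨w'', hw''S, hyw'', hw''K, hw''a⟩ := hb'
      have hlt : (comp G (S \ {y, a}) w').ncard < m := by
        rw [hcompw', ← hm]
        refine Set.ncard_lt_ncard ?_ (Set.toFinite _)
        refine (Set.ssubset_iff_of_subset (fun u hu => (hKsub hu).2)).mpr
          ⟨a, haCA, fun h => haQ12 (hKsub h)⟩
      have hw'a : w' ≠ a := fun h => haQ12 (h ▸ hw'Q12)
      have hbK' : w'' ∉ comp G (S \ {y, a}) w' := by rw [hcompw']; exact hw''K
      exact IH _ hlt y a w' w'' rfl hy ha hay.symm hw'S hw''S hw'a hw''a hyw' hyw'' hbK'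
    · exfalso
      have hCAa : ∀ z ∈ CA, z = a := by
        intro z hzCA
        by_contra hza
        obtain ⟨hzS, hzx, hzy⟩ := mem_diff_pair.mp (comp_subset hzCA)
        have hzb : z ≠ b := fun h => hbC (h ▸ hzCA)
        have hz_ab : z ∈ S \ {a, b} := mem_diff_pair.mpr ⟨hzS, hza, hzb⟩
        rcases claim1 hnocut ha hb hx hax hay hbx hby hbC hz_ab with h | h
        · exact hQ11ne ⟨z, ⟨⟨h, notmem_single hzx⟩, hzCA⟩⟩
        · exact hQ12ne ⟨z, ⟨⟨h, notmem_single hzy⟩, hzCA⟩⟩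
      obtain ⟨w, hwS, haw, hwx, hwy⟩ := hdeg3 a ha x y
      have hwCA : w ∈ CA := adj_mem_comp haCA (mem_diff_pair.mpr ⟨hwS, hwx, hwy⟩) haw
      exact G.loopless.irrefl a ((hCAa w hwCA) ▸ haw)

variable {k : ℕ}

/-- proper colouring on a finite set of vertices -/
def ProperOn (G : SimpleGraph V) (S : Finset V) (c : V → Fin k) : Prop :=
  ∀ u ∈ S, ∀ w ∈ S, G.Adj u w → c u ≠ c w

lemma properOn_mono {S T : Finset V} {c : V → Fin k} (hTS : T ⊆ S)
    (h : ProperOn G S c) : ProperOn G T c :=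
  fun u hu w hw hadj => h u (hTS hu) w (hTS hw) hadj

lemma properOn_comp {S : Finset V} {c : V → Fin k} (e : Fin k ≃ Fin k)
    (h : ProperOn G S c) : ProperOn G S (fun z => e (c z)) :=
  fun u hu w hw hadj hne => h u hu w hw hadj (e.injective hne)

lemma free_color (hk : 0 < k) (A : Finset V) (c : V → Fin k)
    (h : (A.image c).card < k) : ∃ col : Fin k, ∀ u ∈ A, c u ≠ col := by
  classical
  have hne : (A.image c) ≠ Finset.univ := by
    intro he
    rw [he, Finset.card_univ, Fintype.card_fin] at h
    omega
  have : ∃ col : Fin k, col ∉ A.image c := by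
    by_contra h'
    push_neg at h'
    exact hne (Finset.eq_univ_iff_forall.mpr h')
  obtain ⟨col, hcol⟩ := this
  exact ⟨col, fun u hu hc => hcol (Finset.mem_image.mpr ⟨u, hu, hc⟩)⟩

lemma greedy_extend {S : Finset V} {z : V} {c : V → Fin k} (hk : 0 < k)
    (hc : ProperOn G (S.erase z) c)
    (hdeg : (((S.erase z)).filter (fun u => G.Adj z u)).card < k) :
    ∃ c' : V → Fin k, ProperOn G S c' ∧ ∀ w, w ≠ z → c' w = c w := by
  classical
  have himg : (((S.erase z).filter (fun u => G.Adj z u)).image c).card < k :=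
    lt_of_le_of_lt Finset.card_image_le hdeg
  obtain ⟨col, hcol⟩ := free_color hk _ c himg
  refine ⟨Function.update c z col, ?_, fun w hw => Function.update_of_ne hw _ _⟩
  intro u hu w hw hadj
  by_cases huz : u = z
  · subst huz
    have hwz : w ≠ u := fun h => G.loopless.irrefl u (h ▸ hadj)
    rw [Function.update_self, Function.update_of_ne hwz]
    have hmem : w ∈ (S.erase u).filter (fun u' => G.Adj u u') :=
      Finset.mem_filter.mpr ⟨Finset.mem_erase.mpr ⟨hwz, hw⟩, hadj⟩
    exact fun h => hcol w hmem h.symm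
  · by_cases hwz : w = z
    · subst hwz
      rw [Function.update_self, Function.update_of_ne huz]
      have hmem : u ∈ (S.erase w).filter (fun u' => G.Adj w u') :=
        Finset.mem_filter.mpr ⟨Finset.mem_erase.mpr ⟨huz, hu⟩, hadj.symm⟩
      exact fun h => hcol u hmem h
    · rw [Function.update_of_ne huz, Function.update_of_ne hwz]
      exact hc u (Finset.mem_erase.mpr ⟨huz, hu⟩) w (Finset.mem_erase.mpr ⟨hwz, hw⟩) hadj

lemma ext_color {S : Finset V} {v a b : V} (hk : 0 < k)
    (hvS : v ∈ S) (haS : a ∈ S) (hbS : b ∈ S)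
    (hva : G.Adj v a) (hvb : G.Adj v b) (hnadj : ¬ G.Adj a b) (hne : a ≠ b)
    (hdegS : ∀ z ∈ S, (S.filter (fun u => G.Adj z u)).card = k)
    (hconn : ∀ u ∈ (↑S : Set V) \ {a, b}, ∀ w ∈ (↑S : Set V) \ {a, b},
      Reach G ((↑S : Set V) \ {a, b}) u w) :
    ∃ c : V → Fin k, ProperOn G S c := by
  classical
  have hav : a ≠ v := fun h => G.loopless.irrefl v (h ▸ hva)
  have hbv : b ≠ v := fun h => G.loopless.irrefl v (h ▸ hvb)
  have claim : ∀ M : ℕ, ∀ T : Finset V, T.card = M → a ∈ T → b ∈ T → T ⊆ S.erase v →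
      ∃ c : V → Fin k, ProperOn G T c ∧ c a = c b := by
    intro M
    induction M using Nat.strong_induction_on with
    | _ M IH =>
    intro T hM haT hbT hTsub
    by_cases htriv : ∀ z ∈ T, z = a ∨ z = b
    · refine ⟨fun _ => ⟨0, hk⟩, ?_, rfl⟩
      intro u hu w hw hadj _
      rcases htriv u hu with rfl | rfl <;> rcases htriv w hw with rfl | rfl <;>
        first
        | exact G.loopless.irrefl _ hadj
        | exact hnadj hadj
        | exact hnadj hadj.symm
    · push_neg at htriv
      obtain ⟨z₀, hz₀T, hz₀a, hz₀b⟩ := htriv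
      have hfind : ∃ z ∈ T, z ≠ a ∧ z ≠ b ∧ ∃ w₀ ∈ S, G.Adj z w₀ ∧ w₀ ∉ T := by
        by_contra hno
        push_neg at hno
        have hcl : ∀ z' ∈ (↑T : Set V) \ {a, b}, ∀ w ∈ (↑S : Set V) \ {a, b},
            G.Adj z' w → w ∈ (↑T : Set V) \ {a, b} := by
          intro z' hz' w hw hadj
          obtain ⟨hz'T, hz'a, hz'b⟩ := mem_diff_pair.mp hz'
          obtain ⟨hwS, hwa, hwb⟩ := mem_diff_pair.mp hw
          exact mem_diff_pair.mpr
            ⟨hno z' hz'T hz'a hz'b w (Finset.mem_coe.mp hwS) hadj, hwa, hwb⟩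
        have hz₀S : z₀ ∈ S := Finset.mem_of_mem_erase (hTsub hz₀T)
        have hz₀' : z₀ ∈ (↑S : Set V) \ {a, b} := mem_diff_pair.mpr ⟨hz₀S, hz₀a, hz₀b⟩
        have hv' : v ∈ (↑S : Set V) \ {a, b} := mem_diff_pair.mpr ⟨hvS, hav.symm, hbv.symm⟩
        have hz₀'' : z₀ ∈ (↑T : Set V) \ {a, b} := mem_diff_pair.mpr ⟨hz₀T, hz₀a, hz₀b⟩
        have hvT := closed_reach hcl hz₀'' (hconn z₀ hz₀' v hv')
        have hvT' : v ∈ T := Finset.mem_coe.mp (mem_diff_pair.mp hvT).1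
        exact (Finset.mem_erase.mp (hTsub hvT')).1 rfl
      obtain ⟨z, hzT, hza, hzb, w₀, hw₀S, hzw₀, hw₀T⟩ := hfind
      have hlt : (T.erase z).card < M := hM ▸ Finset.card_erase_lt_of_mem hzT
      obtain ⟨c, hc, hcab⟩ := IH _ hlt (T.erase z) rfl
        (Finset.mem_erase.mpr ⟨Ne.symm hza, haT⟩)
        (Finset.mem_erase.mpr ⟨Ne.symm hzb, hbT⟩)
        ((Finset.erase_subset _ _).trans hTsub)
      have hzS : z ∈ S := Finset.mem_of_mem_erase (hTsub hzT)
      have hdegz : ((T.erase z).filter (fun u => G.Adj z u)).card < k := by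
        have hsub2 : (T.erase z).filter (fun u => G.Adj z u) ⊆
            (S.filter (fun u => G.Adj z u)).erase w₀ := by
          intro u hu
          obtain ⟨huT, hadj⟩ := Finset.mem_filter.mp hu
          have huT' : u ∈ T := Finset.mem_of_mem_erase huT
          have huS : u ∈ S := Finset.mem_of_mem_erase (hTsub huT')
          exact Finset.mem_erase.mpr
            ⟨fun h => hw₀T (h ▸ huT'), Finset.mem_filter.mpr ⟨huS, hadj⟩⟩
        have hw₀F : w₀ ∈ S.filter (fun u => G.Adj z u) := Finset.mem_filter.mpr ⟨hw₀S, hzw₀⟩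
        calc ((T.erase z).filter (fun u => G.Adj z u)).card
            ≤ ((S.filter (fun u => G.Adj z u)).erase w₀).card := Finset.card_le_card hsub2
          _ = k - 1 := by rw [Finset.card_erase_of_mem hw₀F, hdegS z hzS]
          _ < k := by omega
      obtain ⟨c', hc', hagree⟩ := greedy_extend hk hc hdegz
      exact ⟨c', hc', by rw [hagree a (Ne.symm hza), hagree b (Ne.symm hzb)]; exact hcab⟩
  obtain ⟨c, hc, hcab⟩ := claim (S.erase v).card (S.erase v) rfl
    (Finset.mem_erase.mpr ⟨hav, haS⟩) (Finset.mem_erase.mpr ⟨hbv, hbS⟩) (subset_refl _)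
  set F := S.filter (fun u => G.Adj v u) with hF
  have haF : a ∈ F := Finset.mem_filter.mpr ⟨haS, hva⟩
  have hbF : b ∈ F := Finset.mem_filter.mpr ⟨hbS, hvb⟩
  have himg : (F.image c).card < k := by
    have hsub : F.image c ⊆ (F.erase b).image c := by
      intro col hcol
      obtain ⟨u, huF, hcu⟩ := Finset.mem_image.mp hcol
      by_cases hub : u = b
      · subst hub
        exact Finset.mem_image.mpr ⟨a, Finset.mem_erase.mpr ⟨hne, haF⟩, hcab.trans hcu⟩
      · exact Finset.mem_image.mpr ⟨u, Finset.mem_erase.mpr ⟨hub, huF⟩, hcu⟩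
    calc (F.image c).card ≤ ((F.erase b).image c).card := Finset.card_le_card hsub
      _ ≤ (F.erase b).card := Finset.card_image_le
      _ = k - 1 := by rw [Finset.card_erase_of_mem hbF, hF]; rw [hdegS v hvS]
      _ < k := by omega
  obtain ⟨col, hcol⟩ := free_color hk F c himg
  refine ⟨Function.update c v col, ?_⟩
  intro u hu w hw hadj
  by_cases huv : u = v
  · subst huv
    have hwv : w ≠ u := fun h => G.loopless.irrefl u (h ▸ hadj)
    rw [Function.update_self, Function.update_of_ne hwv]
    exact fun h => hcol w (Finset.mem_filter.mpr ⟨hw, hadj⟩) h.symm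
  · by_cases hwv : w = v
    · subst hwv
      rw [Function.update_self, Function.update_of_ne huv]
      exact fun h => hcol u (Finset.mem_filter.mpr ⟨hu, hadj.symm⟩) h
    · rw [Function.update_of_ne huv, Function.update_of_ne hwv]
      exact hc u (Finset.mem_erase.mpr ⟨huv, hu⟩) w (Finset.mem_erase.mpr ⟨hwv, hw⟩) hadj

section Main

variable {D : V → V → Prop} {n : ℕ}

lemma adj_iff (hasym : ∀ a b, D a b → ¬ D b a) {a b : V} :
    (underlyingGraph D).Adj a b ↔ (D a b ∨ D b a) := by
  constructor
  · exact fun h => (show a ≠ b ∧ (D a b ∨ D b a) from h).2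
  · intro h
    refine (⟨?_, h⟩ : a ≠ b ∧ (D a b ∨ D b a))
    rintro rfl
    rcases h with h | h <;> exact hasym _ _ h h

lemma deg_count (hasym : ∀ a b, D a b → ¬ D b a)
    (hindeg : ∀ v : V, {u | D u v}.ncard ≤ n) (S : Finset V)
    (hge : ∀ v ∈ S, 2 * n ≤ (S.filter (fun u => (underlyingGraph D).Adj v u)).card) :
    ∀ v ∈ S, (S.filter (fun u => (underlyingGraph D).Adj v u)).card = 2 * n := by
  classical
  set dout : V → ℕ := fun v => (S.filter (fun u => D v u)).card with hdout
  set din : V → ℕ := fun v => (S.filter (fun u => D u v)).card with hdin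
  have hsplit : ∀ v : V,
      (S.filter (fun u => (underlyingGraph D).Adj v u)).card = dout v + din v := by
    intro v
    have h1 : S.filter (fun u => (underlyingGraph D).Adj v u) =
        S.filter (fun u => D v u ∨ D u v) := by
      apply Finset.filter_congr
      intro u _
      simp only [adj_iff hasym]
    rw [h1, Finset.filter_or, Finset.card_union_of_disjoint]
    rw [Finset.disjoint_left]
    intro u hu1 hu2
    exact hasym _ _ (Finset.mem_filter.mp hu1).2 (Finset.mem_filter.mp hu2).2
  have hswap : ∑ v ∈ S, din v = ∑ v ∈ S, dout v := by
    simp only [hdin, hdout, Finset.card_filter]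
    exact Finset.sum_comm
  have hdin_le : ∀ v : V, din v ≤ n := by
    intro v
    have hsub : S.filter (fun u => D u v) ⊆ {u | D u v}.toFinset := by
      intro u hu; simpa using (Finset.mem_filter.mp hu).2
    calc din v ≤ {u | D u v}.toFinset.card := Finset.card_le_card hsub
      _ = {u | D u v}.ncard := (Set.ncard_eq_toFinset_card' _).symm
      _ ≤ n := hindeg v
  have hsum_le : ∑ v ∈ S, (S.filter (fun u => (underlyingGraph D).Adj v u)).card
      ≤ 2 * n * S.card := by
    calc ∑ v ∈ S, (S.filter (fun u => (underlyingGraph D).Adj v u)).card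
        = ∑ v ∈ S, (dout v + din v) := Finset.sum_congr rfl (fun v _ => hsplit v)
      _ = ∑ v ∈ S, dout v + ∑ v ∈ S, din v := Finset.sum_add_distrib
      _ = ∑ v ∈ S, din v + ∑ v ∈ S, din v := by rw [hswap]
      _ ≤ n * S.card + n * S.card := by
          have : ∑ v ∈ S, din v ≤ n * S.card := by
            calc ∑ v ∈ S, din v ≤ ∑ _v ∈ S, n := Finset.sum_le_sum (fun v _ => hdin_le v)
              _ = n * S.card := by rw [Finset.sum_const, smul_eq_mul, Nat.mul_comm]
          omega
      _ = 2 * n * S.card := by ring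
  intro v hv
  by_contra hne
  have hgt : 2 * n < (S.filter (fun u => (underlyingGraph D).Adj v u)).card :=
    lt_of_le_of_ne (hge v hv) (fun h => hne h.symm)
  have hstrict : ∑ _v ∈ S, 2 * n < ∑ v ∈ S, (S.filter (fun u => (underlyingGraph D).Adj v u)).card :=
    Finset.sum_lt_sum (fun i hi => hge i hi) ⟨v, hv, hgt⟩
  rw [Finset.sum_const, smul_eq_mul, Nat.mul_comm] at hstrict
  exact lt_irrefl _ (lt_of_lt_of_le hstrict hsum_le)

lemma clique_contra
    (hnotour : ¬ ∃ f : Fin (2 * n + 1) → V, Function.Injective f ∧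
      ∀ i j, i ≠ j → (D (f i) (f j) ∨ D (f j) (f i)))
    (T : Finset V) (hcard : T.card = 2 * n + 1)
    (hadj : ∀ u ∈ T, ∀ w ∈ T, u ≠ w → (underlyingGraph D).Adj u w) : False := by
  classical
  have hT : Fintype.card ↥T = 2 * n + 1 := by rw [Fintype.card_coe]; exact hcard
  set e := Fintype.equivFinOfCardEq hT with he
  apply hnotour
  refine ⟨fun i => (e.symm i : V), ?_, ?_⟩
  · intro i j hij
    exact e.symm.injective (Subtype.val_injective hij)
  · intro i j hij
    have hne : ((e.symm i : V)) ≠ (e.symm j : V) :=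
      fun h => hij (e.symm.injective (Subtype.val_injective h))
    exact (show (e.symm i : V) ≠ e.symm j ∧ (D (e.symm i) (e.symm j) ∨ D (e.symm j) (e.symm i))
      from hadj _ (e.symm i).2 _ (e.symm j).2 hne).2

lemma main_color (hasym : ∀ a b, D a b → ¬ D b a) (hn : 2 ≤ n)
    (hnotour : ¬ ∃ f : Fin (2 * n + 1) → V, Function.Injective f ∧
      ∀ i j, i ≠ j → (D (f i) (f j) ∨ D (f j) (f i)))
    (hindeg : ∀ v : V, {u | D u v}.ncard ≤ n) :
    ∀ N : ℕ, ∀ S : Finset V, S.card = N →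
      ∃ c : V → Fin (2 * n), ProperOn (underlyingGraph D) S c := by
  classical
  set G := underlyingGraph D with hG
  have hk : 0 < 2 * n := by omega
  intro N
  induction N using Nat.strong_induction_on with
  | _ N IH =>
  intro S hS
  rcases Finset.eq_empty_or_nonempty S with rfl | hSne
  · exact ⟨fun _ => ⟨0, hk⟩, fun u hu => absurd hu (Finset.notMem_empty u)⟩
  by_cases hlow : ∃ v ∈ S, (S.filter (fun u => G.Adj v u)).card < 2 * n
  · obtain ⟨v, hvS, hvdeg⟩ := hlow
    have hlt : (S.erase v).card < N := hS ▸ Finset.card_erase_lt_of_mem hvS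
    obtain ⟨c, hc⟩ := IH _ hlt (S.erase v) rfl
    have hdeg : ((S.erase v).filter (fun u => G.Adj v u)).card < 2 * n :=
      lt_of_le_of_lt
        (Finset.card_le_card (Finset.filter_subset_filter _ (Finset.erase_subset _ _))) hvdeg
    obtain ⟨c', hc', _⟩ := greedy_extend hk hc hdeg
    exact ⟨c', hc'⟩
  push_neg at hlow
  have hreg : ∀ v ∈ S, (S.filter (fun u => G.Adj v u)).card = 2 * n :=
    deg_count hasym hindeg S hlow
  by_cases hconn : ∀ u ∈ (↑S : Set V), ∀ w ∈ (↑S : Set V), Reach G (↑S : Set V) u w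
  swap
  · -- S is disconnected: split into two pieces
    push_neg at hconn
    obtain ⟨u, huS, w, hwS, hnr⟩ := hconn
    set C := comp G (↑S : Set V) u with hC
    set T₁ := S.filter (fun z => z ∈ C) with hT₁
    set T₂ := S.filter (fun z => z ∉ C) with hT₂
    have hwT₁ : w ∉ T₁ := fun h => hnr (reach_of_mem_comp (Finset.mem_filter.mp h).2)
    have huT₂ : u ∉ T₂ := fun h => (Finset.mem_filter.mp h).2 (mem_comp_self huS)
    have h1 : T₁.card < N := hS ▸ Finset.card_lt_card
      ⟨Finset.filter_subset _ _, fun hsub => hwT₁ (hsub (Finset.mem_coe.mp hwS))⟩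
    have h2 : T₂.card < N := hS ▸ Finset.card_lt_card
      ⟨Finset.filter_subset _ _, fun hsub => huT₂ (hsub (Finset.mem_coe.mp huS))⟩
    obtain ⟨c₁, hc₁⟩ := IH _ h1 T₁ rfl
    obtain ⟨c₂, hc₂⟩ := IH _ h2 T₂ rfl
    refine ⟨fun z => if z ∈ C then c₁ z else c₂ z, ?_⟩
    intro p hp q hq hadj
    by_cases hpC : p ∈ C <;> by_cases hqC : q ∈ C
    · simp only [if_pos hpC, if_pos hqC]
      exact hc₁ p (Finset.mem_filter.mpr ⟨hp, hpC⟩) q (Finset.mem_filter.mpr ⟨hq, hqC⟩) hadj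
    · exact absurd (adj_mem_comp hpC (Finset.mem_coe.mpr hq) hadj) hqC
    · exact absurd (adj_mem_comp hqC (Finset.mem_coe.mpr hp) hadj.symm) hpC
    · simp only [if_neg hpC, if_neg hqC]
      exact hc₂ p (Finset.mem_filter.mpr ⟨hp, hpC⟩) q (Finset.mem_filter.mpr ⟨hq, hqC⟩) hadj
  by_cases hnocut : ∀ s ∈ (↑S : Set V), ∀ u ∈ (↑S : Set V) \ {s}, ∀ w ∈ (↑S : Set V) \ {s},
      Reach G ((↑S : Set V) \ {s}) u w
  swap
  · -- there is a cutvertex x: glue two pieces at x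
    push_neg at hnocut
    obtain ⟨x, hxS, u, hux, w, hwx, hnr⟩ := hnocut
    obtain ⟨huS, hune⟩ := mem_diff_one.mp hux
    obtain ⟨hwS, hwne⟩ := mem_diff_one.mp hwx
    set A := (↑S : Set V) \ {x} with hA
    set C := comp G A u with hC
    have hxC : x ∉ C := fun h => (mem_diff_one.mp (comp_subset h)).2 rfl
    set T₁ := S.filter (fun z => z ∈ C ∨ z = x) with hT₁
    set T₂ := S.filter (fun z => z ∉ C) with hT₂
    have hwT₁ : w ∉ T₁ := by
      intro h
      rcases (Finset.mem_filter.mp h).2 with h' | h'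
      · exact hnr (reach_of_mem_comp h')
      · exact hwne h'
    have huT₂ : u ∉ T₂ := fun h => (Finset.mem_filter.mp h).2 (mem_comp_self hux)
    have h1 : T₁.card < N := hS ▸ Finset.card_lt_card
      ⟨Finset.filter_subset _ _, fun hsub => hwT₁ (hsub (Finset.mem_coe.mp hwS))⟩
    have h2 : T₂.card < N := hS ▸ Finset.card_lt_card
      ⟨Finset.filter_subset _ _, fun hsub => huT₂ (hsub (Finset.mem_coe.mp huS))⟩
    obtain ⟨c₁, hc₁⟩ := IH _ h1 T₁ rfl
    obtain ⟨c₂, hc₂⟩ := IH _ h2 T₂ rfl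
    have hxT₁ : x ∈ T₁ := Finset.mem_filter.mpr ⟨Finset.mem_coe.mp hxS, Or.inr rfl⟩
    have hxT₂ : x ∈ T₂ := Finset.mem_filter.mpr ⟨Finset.mem_coe.mp hxS, hxC⟩
    set d₁ : V → Fin (2 * n) := fun z => Equiv.swap (c₁ x) ⟨0, hk⟩ (c₁ z) with hd₁
    set d₂ : V → Fin (2 * n) := fun z => Equiv.swap (c₂ x) ⟨0, hk⟩ (c₂ z) with hd₂
    have hpd₁ : ProperOn G T₁ d₁ := properOn_comp _ hc₁
    have hpd₂ : ProperOn G T₂ d₂ := properOn_comp _ hc₂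
    have hd₁x : d₁ x = ⟨0, hk⟩ := by simp [hd₁]
    have hd₂x : d₂ x = ⟨0, hk⟩ := by simp [hd₂]
    refine ⟨fun z => if z ∈ C then d₁ z else d₂ z, ?_⟩
    intro p hp q hq hadj
    by_cases hpC : p ∈ C <;> by_cases hqC : q ∈ C
    · simp only [if_pos hpC, if_pos hqC]
      exact hpd₁ p (Finset.mem_filter.mpr ⟨hp, Or.inl hpC⟩) q
        (Finset.mem_filter.mpr ⟨hq, Or.inl hqC⟩) hadj
    · by_cases hqx : q = x
      · subst hqx
        simp only [if_pos hpC, if_neg hqC]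
        rw [hd₂x, ← hd₁x]
        exact hpd₁ p (Finset.mem_filter.mpr ⟨hp, Or.inl hpC⟩) q hxT₁ hadj
      · exact absurd (adj_mem_comp hpC (mem_diff_one.mpr ⟨Finset.mem_coe.mpr hq, hqx⟩) hadj) hqC
    · by_cases hpx : p = x
      · subst hpx
        simp only [if_pos hqC, if_neg hpC]
        rw [hd₂x, ← hd₁x]
        exact fun h => (hpd₁ q (Finset.mem_filter.mpr ⟨hq, Or.inl hqC⟩) p hxT₁ hadj.symm) h.symm
      · exact absurd (adj_mem_comp hqC (mem_diff_one.mpr ⟨Finset.mem_coe.mpr hp, hpx⟩) hadj.symm) hpC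
    · simp only [if_neg hpC, if_neg hqC]
      exact hpd₂ p (Finset.mem_filter.mpr ⟨hp, hpC⟩) q (Finset.mem_filter.mpr ⟨hq, hqC⟩) hadj
  -- the regular 2-connected case
  obtain ⟨v₀, hv₀⟩ := hSne
  have hdeg3 : ∀ z ∈ (↑S : Set V), ∀ p q : V, ∃ y ∈ (↑S : Set V), G.Adj z y ∧ y ≠ p ∧ y ≠ q := by
    intro z hzS p q
    have hz : (S.filter (fun u => G.Adj z u)).card = 2 * n := hreg z (Finset.mem_coe.mp hzS)
    have hpq2 : ({p, q} : Finset V).card ≤ 2 :=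
      (Finset.card_insert_le _ _).trans (by simp)
    have hne : ((S.filter (fun u => G.Adj z u)) \ {p, q}).Nonempty := by
      apply Finset.card_pos.mp
      have := Finset.le_card_sdiff ({p, q} : Finset V) (S.filter (fun u => G.Adj z u))
      omega
    obtain ⟨y, hy⟩ := hne
    obtain ⟨hyf, hynot⟩ := Finset.mem_sdiff.mp hy
    obtain ⟨hyS, hyadj⟩ := Finset.mem_filter.mp hyf
    refine ⟨y, Finset.mem_coe.mpr hyS, hyadj, ?_, ?_⟩ <;>
      (intro h; exact hynot (by simp [h]))
  set F := S.filter (fun u => G.Adj v₀ u) with hFdef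
  have hvF : v₀ ∉ F := fun h => G.loopless.irrefl v₀ (Finset.mem_filter.mp h).2
  have hcardT : (insert v₀ F).card = 2 * n + 1 := by
    rw [Finset.card_insert_of_notMem hvF, hreg v₀ hv₀]
  have hnc : ¬ ∀ u ∈ insert v₀ F, ∀ w ∈ insert v₀ F, u ≠ w → G.Adj u w :=
    fun h => clique_contra hnotour _ hcardT h
  push_neg at hnc
  obtain ⟨p, hpT, q, hqT, hpq, hnadj⟩ := hnc
  have hget : ∀ r t : V, r ∈ insert v₀ F → t ∈ insert v₀ F → r ≠ t → ¬ G.Adj r t → r ∈ F := by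
    intro r t hr ht hrt hnadj'
    rcases Finset.mem_insert.mp hr with rfl | h
    · exfalso
      rcases Finset.mem_insert.mp ht with rfl | h'
      · exact hrt rfl
      · exact hnadj' (Finset.mem_filter.mp h').2
    · exact h
  have hpF : p ∈ F := hget p q hpT hqT hpq hnadj
  have hqF : q ∈ F := hget q p hqT hpT hpq.symm (fun h => hnadj h.symm)
  have hvp : G.Adj v₀ p := (Finset.mem_filter.mp hpF).2
  have hvq : G.Adj v₀ q := (Finset.mem_filter.mp hqF).2
  have hpS : p ∈ S := (Finset.mem_filter.mp hpF).1
  have hqS : q ∈ S := (Finset.mem_filter.mp hqF).1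
  have htriple : ∃ v' a' b', v' ∈ S ∧ a' ∈ S ∧ b' ∈ S ∧ G.Adj v' a' ∧ G.Adj v' b' ∧
      ¬ G.Adj a' b' ∧ a' ≠ b' ∧ ∀ u ∈ (↑S : Set V) \ {a', b'}, ∀ w ∈ (↑S : Set V) \ {a', b'},
        Reach G ((↑S : Set V) \ {a', b'}) u w := by
    by_cases hres : ∀ u ∈ (↑S : Set V) \ {p, q}, ∀ w ∈ (↑S : Set V) \ {p, q},
        Reach G ((↑S : Set V) \ {p, q}) u w
    · exact ⟨v₀, p, q, hv₀, hpS, hqS, hvp, hvq, hnadj, hpq, hres⟩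
    · push_neg at hres
      obtain ⟨u, hu, w, hw, hnr⟩ := hres
      set A := (↑S : Set V) \ {p, q} with hA
      have hfind : ∀ z z' : V, z ∈ A → z' ∈ A → ¬ Reach G A z z' →
          ∃ a₁ ∈ comp G A z, G.Adj p a₁ := by
        intro z z' hz hz' hnr'
        by_contra hno
        push_neg at hno
        have hcl : ∀ y ∈ comp G A z, ∀ r ∈ (↑S : Set V) \ {q}, G.Adj y r → r ∈ comp G A z := by
          intro y hy r hr hadj
          obtain ⟨hrS, hrq⟩ := mem_diff_one.mp hr
          by_cases hrp : r = p
          · subst hrp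
            exact absurd hadj.symm (hno y hy)
          · exact adj_mem_comp hy (mem_diff_pair.mpr ⟨hrS, hrp, hrq⟩) hadj
        obtain ⟨hzS, hzp, hzq⟩ := mem_diff_pair.mp hz
        obtain ⟨hz'S, hz'p, hz'q⟩ := mem_diff_pair.mp hz'
        have hreach := hnocut q (Finset.mem_coe.mpr hqS) z (mem_diff_one.mpr ⟨hzS, hzq⟩)
          z' (mem_diff_one.mpr ⟨hz'S, hz'q⟩)
        exact hnr' (reach_of_mem_comp (closed_reach hcl (mem_comp_self hz) hreach))
      obtain ⟨a₁, ha₁K, hpa₁⟩ := hfind u w hu hw hnr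
      obtain ⟨b₁, hb₁K, hpb₁⟩ := hfind w u hw hu (fun h => hnr (reach_symm h))
      have hb₁not : b₁ ∉ comp G A a₁ := by
        rw [comp_eq_of_mem ha₁K]
        intro h
        have h1 : comp G A b₁ = comp G A u := comp_eq_of_mem h
        have h2 : comp G A b₁ = comp G A w := comp_eq_of_mem hb₁K
        have hwcu : w ∈ comp G A u := by rw [← h1, h2]; exact mem_comp_self hw
        exact hnr (reach_of_mem_comp hwcu)
      obtain ⟨ha₁S, ha₁p, ha₁q⟩ := mem_diff_pair.mp (comp_subset ha₁K)
      obtain ⟨hb₁S, hb₁p, hb₁q⟩ := mem_diff_pair.mp (comp_subset hb₁K)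
      obtain ⟨v', a', b', h0, h1, h2, h3, h4, h5, h6, h7⟩ :=
        lemB hnocut hdeg3 _ p q a₁ b₁ rfl (Finset.mem_coe.mpr hpS) (Finset.mem_coe.mpr hqS)
          hpq ha₁S hb₁S ha₁q hb₁q hpa₁ hpb₁ hb₁not
      exact ⟨v', a', b', Finset.mem_coe.mp h0, Finset.mem_coe.mp h1, Finset.mem_coe.mp h2,
        h3, h4, h5, h6, h7⟩
  obtain ⟨v', a', b', hv'S, ha'S, hb'S, h3, h4, h5, h6, h7⟩ := htriple
  exact ext_color hk hv'S ha'S hb'S h3 h4 h5 h6 hreg h7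

end Main

end BrooksAux

theorem stmt_1 {V : Type*} [Fintype V] (D : V → V → Prop)
    (hasym : ∀ a b, D a b → ¬ D b a) (n : ℕ) (hn : 2 ≤ n)
    (hnotour : ¬ ∃ f : Fin (2 * n + 1) → V, Function.Injective f ∧
      ∀ i j, i ≠ j → (D (f i) (f j) ∨ D (f j) (f i)))
    (hindeg : ∀ v : V, {u | D u v}.ncard ≤ n) :
    (underlyingGraph D).chromaticNumber ≤ ((2 * n : ℕ) : ℕ∞) := by
  classical
  obtain ⟨c, hc⟩ := BrooksAux.main_color hasym hn hnotour hindeg Finset.univ.card Finset.univ rfl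
  have hcol : (underlyingGraph D).Colorable (2 * n) :=
    ⟨SimpleGraph.Coloring.mk c (fun {u w} h => hc u (Finset.mem_univ u) w (Finset.mem_univ w) h)⟩
  exact hcol.chromaticNumber_le
end

section
/- Let D be a digraph containing no copy of the antidirected path p4, in which every vertex has out-degree at least two. If v is a vertex with out-degree at least 3, x, y, z are three distinct out-neighbors of v, and there is an arc x → y, then: there is an arc x → z, the vertices y and z are non-adjacent, and the in-neighborhood of y and of z both equal exactly {v, x}. -/
theorem stmt_3 {V : Type*} (D : V → V → Prop)
    (hasym : ∀ a b, D a b → ¬ D b a)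
    (hnop4 : ¬ HasP4 D)
    (hmin : ∀ u : V, ∃ a b : V, a ≠ b ∧ D u a ∧ D u b)
    (v x y z : V) (hxy : x ≠ y) (hxz : x ≠ z) (hyz : y ≠ z)
    (hvx : D v x) (hvy : D v y) (hvz : D v z) (harc : D x y) :
    D x z ∧ ¬ D y z ∧ ¬ D z y ∧
      {u | D u y} = ({v, x} : Set V) ∧ {u | D u z} = ({v, x} : Set V) := by
  have neD : ∀ a b : V, D a b → a ≠ b := by
    intro a b h hab; subst hab; exact hasym a a h h
  have pick : ∀ u t : V, ∃ w, w ≠ t ∧ D u w := by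
    intro u t
    obtain ⟨a, b, hab, ha, hb⟩ := hmin u
    by_cases h : a = t
    · subst h; exact ⟨b, fun hbt => hab hbt.symm, hb⟩
    · exact ⟨a, h, ha⟩
  have mk : ∀ X Y Z W U : V, D Y X → D Y Z → D W Z → D W U →
      X ≠ Z → X ≠ W → X ≠ U → Y ≠ Z → Y ≠ W → Y ≠ U → Z ≠ U → False := by
    intro X Y Z W U h1 h2 h3 h4 n1 n2 n3 n4 n5 n6 n7
    exact hnop4 ⟨X, Y, Z, W, U, (neD _ _ h1).symm, n1, n2, n3, n4, n5, n6,
      (neD _ _ h3).symm, n7, neD _ _ h4, h1, h2, h3, h4⟩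
  have hvx' : v ≠ x := neD _ _ hvx
  have hvy' : v ≠ y := neD _ _ hvy
  have hvz' : v ≠ z := neD _ _ hvz
  -- Step 1: D x z
  have hDxz : D x z := by
    obtain ⟨w, hwy, hxw⟩ := pick x y
    by_cases hwz : w = z
    · subst hwz; exact hxw
    · exfalso
      refine mk w x y v z hxw harc hvy hvz hwy ?_ hwz hxy hvx'.symm hxz hyz
      intro h; subst h; exact hasym _ _ hvx hxw
  -- Step 2: nonadjacency of y and z
  have hDyz : ¬ D y z := by
    intro h
    obtain ⟨w, hwz, hyw⟩ := pick y z
    refine mk w y z v x hyw h hvz hvx hwz ?_ ?_ hyz hvy'.symm hxy.symm hxz.symm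
    · intro hw; subst hw; exact hasym _ _ hvy hyw
    · intro hw; subst hw; exact hasym _ _ harc hyw
  have hDzy : ¬ D z y := by
    intro h
    obtain ⟨w, hwy, hzw⟩ := pick z y
    refine mk w z y v x hzw h hvy hvx hwy ?_ ?_ hyz.symm hvz'.symm ?_ hxy.symm
    · intro hw; subst hw; exact hasym _ _ hvz hzw
    · intro hw; subst hw; exact hasym _ _ hDxz hzw
    · exact fun hw => hxz (hw.symm)
  -- in-neighbors of y
  have hy_in : ∀ u, D u y → u = v ∨ u = x := by
    intro u hu
    by_contra hc
    push_neg at hc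
    obtain ⟨huv, hux⟩ := hc
    have huz : u ≠ z := by intro h; subst h; exact hDzy (by simpa using hu)
    obtain ⟨w, hwy, huw⟩ := pick u y
    by_cases hwz : w = z
    · rw [hwz] at huw
      exact mk z u y v x huw hu hvy hvx hyz.symm hvz'.symm hxz.symm
        (neD _ _ hu) huv hux hxy.symm
    · by_cases hwv : w = v
      · rw [hwv] at huw
        exact mk v u y x z huw hu harc hDxz hvy' hvx' hvz' (neD _ _ hu) hux huz hyz
      · by_cases hwx : w = x
        · rw [hwx] at huw
          exact mk x u y v z huw hu hvy hvz hxy hvx'.symm hxz (neD _ _ hu) huv huz hyz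
        · exact mk w u y v z huw hu hvy hvz hwy hwv hwz (neD _ _ hu) huv huz hyz
  -- in-neighbors of z
  have hz_in : ∀ u, D u z → u = v ∨ u = x := by
    intro u hu
    by_contra hc
    push_neg at hc
    obtain ⟨huv, hux⟩ := hc
    have huy : u ≠ y := by intro h; subst h; exact hDyz (by simpa using hu)
    obtain ⟨w, hwz, huw⟩ := pick u z
    by_cases hwy : w = y
    · rw [hwy] at huw
      rcases hy_in u huw with h | h
      · exact huv h
      · exact hux h
    · by_cases hwv : w = v
      · rw [hwv] at huw
        exact mk v u z x y huw hu hDxz harc hvz' hvx' hvy' (neD _ _ hu) hux huy hyz.symm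
      · by_cases hwx : w = x
        · rw [hwx] at huw
          exact mk x u z v y huw hu hvz hvy hxz hvx'.symm hxy (neD _ _ hu) huv huy hyz.symm
        · exact mk w u z v x huw hu hvz hvx hwz hwv hwx (neD _ _ hu) huv hux hxz.symm
  refine ⟨hDxz, hDyz, hDzy, ?_, ?_⟩
  · ext u
    simp only [Set.mem_setOf_eq, Set.mem_insert_iff, Set.mem_singleton_iff]
    constructor
    · exact hy_in u
    · rintro (rfl | rfl)
      · exact hvy
      · exact harc
  · ext u
    simp only [Set.mem_setOf_eq, Set.mem_insert_iff, Set.mem_singleton_iff]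
    constructor
    · exact hz_in u
    · rintro (rfl | rfl)
      · exact hvz
      · exact hDxz
end

section
/- Let D be a digraph with no copy of the antidirected path p4 in which every vertex has out-degree at least two. If v and v' are vertices such that N⁺(v) ∩ N⁻(v') contains two adjacent vertices x and y, then N⁺(v) = {x, y}. -/
theorem stmt_4 {V : Type*} (D : V → V → Prop)
    (hasym : ∀ a b, D a b → ¬ D b a)
    (hnop4 : ¬ HasP4 D)
    (hmin : ∀ u : V, ∃ a b : V, a ≠ b ∧ D u a ∧ D u b)
    (v v' x y : V) (hxy : x ≠ y) (hadj : D x y ∨ D y x)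
    (hx : D v x ∧ D x v') (hy : D v y ∧ D y v') :
    {w | D v w} = ({x, y} : Set V) := by
  have ne_of_arc : ∀ a b : V, D a b → a ≠ b := by
    intro a b h e; subst e; exact hasym a a h h
  have key : ∀ p q : V, p ≠ q → D p q → (D v p ∧ D p v') → (D v q ∧ D q v') →
      ∀ w, D v w → w = p ∨ w = q := by
    intro p q hpq hpqarc hp hq w hw
    by_contra hcon
    push_neg at hcon
    obtain ⟨hwp, hwq⟩ := hcon
    have hpv' : p ≠ v' := ne_of_arc _ _ hp.2
    have hqv' : q ≠ v' := ne_of_arc _ _ hq.2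
    have hvp : v ≠ p := ne_of_arc _ _ hp.1
    have hvq : v ≠ q := ne_of_arc _ _ hq.1
    have hvv' : v ≠ v' := by
      intro e; subst e; exact hasym v p hp.1 hp.2
    by_cases hwv' : w = v'
    · have hw' : D v v' := hwv' ▸ hw
      -- w = v' : use p4 on (p, v, v', q, t) with q→t, t ≠ v'
      obtain ⟨a, b, hab, ha, hb⟩ := hmin q
      obtain ⟨t, htv', ht⟩ : ∃ t, t ≠ v' ∧ D q t := by
        by_cases h : a = v'
        · exact ⟨b, fun e => hab (h.trans e.symm), hb⟩
        · exact ⟨a, h, ha⟩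
      have htp : p ≠ t := by
        intro e; subst e; exact hasym p q hpqarc ht
      have hqt : q ≠ t := ne_of_arc _ _ ht
      have hvt : v ≠ t := by
        intro e; subst e; exact hasym v q hq.1 ht
      exact hnop4 ⟨p, v, v', q, t,
        hvp.symm, hpv', hpq, htp, hvv', hvq, hvt, hqv'.symm, htv'.symm, hqt,
        hp.1, hw', hq.2, ht⟩
    · -- w ≠ v' : use p4 on (v', p, q, v, w)
      exact hnop4 ⟨v', p, q, v, w,
        hpv'.symm, hqv'.symm, hvv'.symm, fun e => hwv' e.symm,
        hpq, hvp.symm, fun e => hwp e.symm, hvq.symm, fun e => hwq e.symm,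
        ne_of_arc _ _ hw,
        hp.2, hpqarc, hq.1, hw⟩
  ext w
  simp only [Set.mem_setOf_eq, Set.mem_insert_iff, Set.mem_singleton_iff]
  constructor
  · intro hw
    rcases hadj with h | h
    · exact key x y hxy h hx hy w hw
    · exact (key y x hxy.symm h hy hx w hw).symm
  · rintro (rfl | rfl)
    · exact hx.1
    · exact hy.1
end

section
/- Let D be a 5-chromatic digraph distinct from the regular 5-tournament T5 in which every vertex has out-degree at least two, D' a 5-critical subdigraph of D containing no copy of p4, and v a vertex of D' with out-degree at least three in D'. Then v has exactly three out-neighbors v1, v2, v3 in D', and (up to relabeling) v1 → v2 and v1 → v3. -/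
/-- `D` is (isomorphic to) the regular 5-tournament `T5`. -/
def IsT5 {V : Type*} [Fintype V] (D : V → V → Prop) : Prop :=
  Fintype.card V = 5 ∧ (∀ a, ¬ D a a) ∧ (∀ a b : V, a ≠ b → (D a b ↔ ¬ D b a)) ∧
    ∀ v : V, {w | D v w}.ncard = 2 ∧ {w | D w v}.ncard = 2

/-- Auxiliary invariant for the independent-neighborhood case:
`x` is in `S` and has a unique in-neighbor `p` in `D`, where `p` has out-degree at least 3. -/
private def Good {V : Type*} (D : V → V → Prop) (S : Set V) (x : V) : Prop :=
  x ∈ S ∧ ∃ p, D p x ∧ (∀ t, D t x → t = p) ∧ 3 ≤ {y | D p y}.ncard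

theorem stmt_6 {V : Type*} [Fintype V] (D : V → V → Prop)
    (hasym : ∀ a b, D a b → ¬ D b a)
    (hchrom : (underlyingGraph D).chromaticNumber = 5)
    (hnotT5 : ¬ IsT5 D)
    (hmin : ∀ u : V, ∃ a b : V, a ≠ b ∧ D u a ∧ D u b)
    (hnop4 : ¬ HasP4 D)
    (S : Set V) (D' : V → V → Prop)
    (hsub : ∀ a b, D' a b → D a b ∧ a ∈ S ∧ b ∈ S)
    (hcrit5 : ((underlyingGraph D').induce S).chromaticNumber = 5)
    (hcrit : ∀ v ∈ S, ((underlyingGraph D').induce (S \ {v})).chromaticNumber < 5)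
    (v : V) (hv : v ∈ S) (hdeg : 3 ≤ {w | D' v w}.ncard) :
    ∃ v1 v2 v3 : V, v1 ≠ v2 ∧ v1 ≠ v3 ∧ v2 ≠ v3 ∧
      {w | D' v w} = ({v1, v2, v3} : Set V) ∧ D v1 v2 ∧ D v1 v3 := by
  classical
  have noloop : ∀ a, ¬ D a a := fun a h => hasym a a h h
  -- convert set ncard to finset card
  have hsetfin : ∀ (P : V → Prop), ({y | P y} : Set V).ncard
      = (Finset.univ.filter (fun y => P y)).card := by
    intro P
    rw [← Set.ncard_coe_finset]
    congr 1
    ext y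
    simp
  -- the p4-freeness classification lemma
  have key3 : ∀ y t z x w : V, D y z → D t z → D y x → D t w → y ≠ t → x ≠ z → w ≠ z →
      x = t ∨ x = w ∨ w = y := by
    intro y t z x w hyz htz hyx htw hyt hxz hwz
    by_contra hcon
    push_neg at hcon
    obtain ⟨h1, h2, h3⟩ := hcon
    exact hnop4 ⟨x, y, z, t, w,
      fun e => noloop y (by rw [e] at hyx; exact hyx),
      hxz, h1, h2,
      fun e => noloop z (by rw [e] at hyz; exact hyz),
      hyt, fun e => h3 e.symm,
      fun e => noloop t (by rw [e] at htz; exact htz),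
      fun e => hwz e.symm,
      fun e => noloop t (by rw [← e] at htw; exact htw),
      hyx, hyz, htz, htw⟩
  -- from min out-degree 2 : out-neighborhood in a 2-set means both realized
  have bothOut : ∀ t p q : V, (∀ w, D t w → w = p ∨ w = q) → D t p ∧ D t q := by
    intro t p q h
    obtain ⟨a, b, hab, ha, hb⟩ := hmin t
    rcases h a ha with e | e <;> rcases h b hb with f | f
    · exact absurd (e.trans f.symm) hab
    · exact ⟨e ▸ ha, f ▸ hb⟩
    · exact ⟨f ▸ hb, e ▸ ha⟩
    · exact absurd (e.trans f.symm) hab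
  -- minimum degree at least 4 in the 5-critical graph
  have mindeg : ∀ x ∈ S,
      4 ≤ (Finset.univ.filter fun y => y ≠ x ∧ (D' x y ∨ D' y x)).card := by
    intro x hx
    by_contra hle
    push_neg at hle
    have hle3 : (Finset.univ.filter fun y => y ≠ x ∧ (D' x y ∨ D' y x)).card ≤ 3 := by omega
    -- get a 4-coloring of S \ {x}
    have hcol : ((underlyingGraph D').induce (S \ {x})).Colorable 4 := by
      rw [← SimpleGraph.chromaticNumber_le_iff_colorable]
      have h4 := hcrit x hx
      by_contra hnot
      push_neg at hnot
      have h5 : ((4 : ℕ) : ℕ∞) + 1 ≤ ((underlyingGraph D').induce (S \ {x})).chromaticNumber :=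
        (ENat.add_one_le_iff (by simp)).2 hnot
      rw [show ((4 : ℕ) : ℕ∞) + 1 = 5 by norm_num] at h5
      exact absurd (lt_of_le_of_lt h5 h4) (lt_irrefl _)
    obtain ⟨c⟩ := hcol
    set Nx := (Finset.univ.filter fun y => y ≠ x ∧ (D' x y ∨ D' y x)) with hNx
    set g : V → Fin 4 := fun y => if h : y ∈ S \ ({x} : Set V) then c ⟨y, h⟩ else 0 with hg
    set used := Nx.image g with hused
    have husedcard : used.card ≤ 3 := le_trans (Finset.card_image_le) hle3
    have hc0 : ∃ c0 : Fin 4, c0 ∉ used := by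
      by_contra hcc
      push_neg at hcc
      have hsubu : (Finset.univ : Finset (Fin 4)) ⊆ used := fun z _ => hcc z
      have := Finset.card_le_card hsubu
      simp at this
      omega
    obtain ⟨c0, hc0⟩ := hc0
    -- extend to a 4-coloring of S
    have hcolS : ((underlyingGraph D').induce S).Colorable 4 := by
      refine ⟨SimpleGraph.Coloring.mk (fun y => if y.1 = x then c0 else g y.1) ?_⟩
      rintro ⟨a, ha⟩ ⟨b, hb⟩ hadj
      have hadj' : a ≠ b ∧ (D' a b ∨ D' b a) := hadj
      show (if a = x then c0 else g a) ≠ (if b = x then c0 else g b)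
      by_cases hax : a = x
      · have hbx : b ≠ x := fun e => hadj'.1 (hax.trans e.symm)
        rw [if_pos hax, if_neg hbx]
        intro he
        apply hc0
        rw [he]
        apply Finset.mem_image_of_mem
        simp only [hNx, Finset.mem_filter, Finset.mem_univ, true_and]
        refine ⟨hbx, ?_⟩
        rw [← hax]
        exact hadj'.2
      · by_cases hbx : b = x
        · rw [if_pos hbx, if_neg hax]
          intro he
          apply hc0
          rw [← he]
          apply Finset.mem_image_of_mem
          simp only [hNx, Finset.mem_filter, Finset.mem_univ, true_and]
          refine ⟨hax, ?_⟩
          rw [← hbx]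
          exact hadj'.2.symm
        · have hamem : a ∈ S \ ({x} : Set V) := ⟨ha, by simp [hax]⟩
          have hbmem : b ∈ S \ ({x} : Set V) := ⟨hb, by simp [hbx]⟩
          rw [if_neg hax, if_neg hbx]
          show (if h : a ∈ S \ ({x} : Set V) then c ⟨a, h⟩ else 0) ≠
            (if h : b ∈ S \ ({x} : Set V) then c ⟨b, h⟩ else 0)
          rw [dif_pos hamem, dif_pos hbmem]
          have hadj2 : ((underlyingGraph D').induce (S \ ({x} : Set V))).Adj
              ⟨a, hamem⟩ ⟨b, hbmem⟩ := hadj'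
          exact c.valid hadj2
    have hle4 := hcolS.chromaticNumber_le
    rw [hcrit5] at hle4
    have : ¬ ((5 : ℕ∞) ≤ ((4 : ℕ) : ℕ∞)) := by norm_num
    exact this hle4
  -- extract three distinct out-neighbors of v
  have hdeg' : 3 ≤ (Finset.univ.filter fun w => D' v w).card := by
    rw [← hsetfin]; exact hdeg
  obtain ⟨t3, ht3sub, ht3card⟩ := Finset.exists_subset_card_eq hdeg'
  obtain ⟨u1, u2, u3, hu12, hu13, hu23, ht3eq⟩ := Finset.card_eq_three.1 ht3card
  have hmemN : ∀ u ∈ t3, D' v u := by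
    intro u hu
    have := ht3sub hu
    simpa using this
  have hvu1 : D' v u1 := hmemN u1 (by rw [ht3eq]; simp)
  have hvu2 : D' v u2 := hmemN u2 (by rw [ht3eq]; simp)
  have hvu3 : D' v u3 := hmemN u3 (by rw [ht3eq]; simp)
  have hDv : ∀ u, D' v u → D v u := fun u h => (hsub v u h).1
  have hneqv : ∀ u, D' v u → u ≠ v := fun u h e => noloop v (by rw [e] at h; exact hDv v h)
  by_cases hcase : ∃ a b, D' v a ∧ D' v b ∧ D a b
  · -- CASE A : an arc inside the out-neighborhood
    obtain ⟨v1, v2, hvv1, hvv2, hv12⟩ := hcase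
    have hv1v2 : v1 ≠ v2 := fun e => noloop v2 (by rw [e] at hv12; exact hv12)
    -- find a third out-neighbor distinct from v1 v2
    have hex3 : ∃ u, D' v u ∧ u ≠ v1 ∧ u ≠ v2 := by
      by_contra hall
      push_neg at hall
      have h1 := hall u1 hvu1
      have h2 := hall u2 hvu2
      have h3 := hall u3 hvu3
      by_cases e1 : u1 = v1 <;> by_cases e2 : u2 = v1 <;> by_cases e3 : u3 = v1
      · exact hu12 (e1.trans e2.symm)
      · exact hu12 (e1.trans e2.symm)
      · exact hu13 (e1.trans e3.symm)
      · exact hu23 ((h2 e2).trans (h3 e3).symm)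
      · exact hu23 (e2.trans e3.symm)
      · exact hu13 ((h1 e1).trans (h3 e3).symm)
      · exact hu12 ((h1 e1).trans (h2 e2).symm)
      · exact hu12 ((h1 e1).trans (h2 e2).symm)
    obtain ⟨v3, hvv3, hv31, hv32⟩ := hex3
    -- any D-out-neighbor of v1 is v2 or the chosen third vertex
    have hout1 : ∀ u, D' v u → u ≠ v1 → u ≠ v2 → ∀ w, D v1 w → w = v2 ∨ w = u := by
      intro u hu hu1 hu2 w hw
      by_contra hcon
      push_neg at hcon
      obtain ⟨hwv2, hwu⟩ := hcon
      exact hnop4 ⟨u, v, v2, v1, w,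
        hneqv u hu, hu2, hu1, fun e => hwu e.symm,
        (hneqv v2 hvv2).symm, (hneqv v1 hvv1).symm,
        fun e => hasym v v1 (hDv v1 hvv1) (by rw [← e] at hw; exact hw),
        hv1v2.symm, fun e => hwv2 e.symm,
        fun e => noloop w (by rw [e] at hw; exact hw),
        hDv u hu, hDv v2 hvv2, hv12, hw⟩
    have hv13 : D v1 v3 := by
      obtain ⟨a, b, hab, ha, hb⟩ := hmin v1
      rcases hout1 v3 hvv3 hv31 hv32 a ha with e | e <;>
        rcases hout1 v3 hvv3 hv31 hv32 b hb with f | f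
      · exact absurd (e.trans f.symm) hab
      · exact f ▸ hb
      · exact e ▸ ha
      · exact absurd (e.trans f.symm) hab
    have hv1v3 : v1 ≠ v3 := fun e => hv31 e.symm
    have hv2v3 : v2 ≠ v3 := fun e => hv32 e.symm
    refine ⟨v1, v2, v3, hv1v2, hv1v3, hv2v3, ?_, hv12, hv13⟩
    ext w
    simp only [Set.mem_setOf_eq, Set.mem_insert_iff, Set.mem_singleton_iff]
    constructor
    · intro hw
      by_cases e1 : w = v1
      · exact Or.inl e1
      by_cases e2 : w = v2
      · exact Or.inr (Or.inl e2)
      rcases hout1 w hw e1 e2 v3 hv13 with e | e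
      · exact absurd e hv2v3.symm
      · exact Or.inr (Or.inr e.symm)
    · rintro (e | e | e) <;> rw [e]
      · exact hvv1
      · exact hvv2
      · exact hvv3
  · -- CASE B : no arc in D between out-neighbors of v; derive False
    exfalso
    push_neg at hcase
    have hB : ∀ a b, D' v a → D' v b → ¬ D a b := fun a b ha hb => hcase a b ha hb
    -- B1 : extra in-neighbors of out-neighbors of v have out-set {u, v}
    have B1 : ∀ u u' u'' t : V, D' v u → D' v u' → D' v u'' → u ≠ u' → u ≠ u'' → u' ≠ u'' →
        t ≠ v → D t u → ∀ w, D t w → w = u ∨ w = v := by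
      intro u u' u'' t hu hu' hu'' h1 h2 h3 htv htu w hw
      by_contra hcon
      push_neg at hcon
      obtain ⟨hwu, hwv⟩ := hcon
      have k1 := key3 v t u u' w (hDv u hu) htu (hDv u' hu') hw htv.symm h1.symm hwu
      have k2 := key3 v t u u'' w (hDv u hu) htu (hDv u'' hu'') hw htv.symm h2.symm hwu
      rcases k1 with e | e | e
      · exact hB u' u hu' hu (by rw [← e] at htu; exact htu)
      · rcases k2 with f | f | f
        · exact hB u'' u hu'' hu (by rw [← f] at htu; exact htu)
        · exact h3 (e.trans f.symm)
        · exact hwv f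
      · exact hwv e
    -- at most one out-neighbor of v has an extra in-neighbor
    have honeT : ∀ u u' u'' t t' : V, D' v u → D' v u' → D' v u'' → u ≠ u' → u ≠ u'' →
        u' ≠ u'' → t ≠ v → t' ≠ v → D t u → D t' u' → False := by
      intro u u' u'' t t' hu hu' hu'' h1 h2 h3 htv ht'v htu ht'u'
      have Bu := B1 u u' u'' t hu hu' hu'' h1 h2 h3 htv htu
      have Bu' := B1 u' u u'' t' hu' hu hu'' h1.symm h3 h2 ht'v ht'u'
      have htvD : D t v := (bothOut t u v Bu).2
      have ht'vD : D t' v := (bothOut t' u' v Bu').2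
      have htt' : t ≠ t' := by
        intro e
        rcases Bu u' (by rw [e]; exact ht'u') with f | f
        · exact h1 f.symm
        · exact hneqv u' hu' f
      have k := key3 t t' v u u' htvD ht'vD htu ht'u' htt' (hneqv u hu) (hneqv u' hu')
      rcases k with e | e | e
      · exact hB u u' hu hu' (by rw [← e] at ht'u'; exact ht'u')
      · exact h1 e
      · exact hB u' u hu' hu (by rw [← e] at htu; exact htu)
    -- pick an out-neighbor r of v whose only in-neighbor is v
    have hrex : ∃ r, D' v r ∧ ∀ t, D t r → t = v := by
      by_cases hP : ∃ t, t ≠ v ∧ D t u1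
      · obtain ⟨t0, ht0v, ht0⟩ := hP
        refine ⟨u2, hvu2, ?_⟩
        intro t ht
        by_contra htv
        exact honeT u1 u2 u3 t0 t hvu1 hvu2 hvu3 hu12 hu13 hu23 ht0v htv ht0 ht
      · push_neg at hP
        refine ⟨u1, hvu1, ?_⟩
        intro t ht
        by_contra htv
        exact hP t htv ht
    obtain ⟨r, hvr, hrins⟩ := hrex
    -- v has D-out-degree at least 3
    have hvout : 3 ≤ {y | D v y}.ncard := by
      rw [hsetfin]
      have hsub3 : ({u1, u2, u3} : Finset V) ⊆ Finset.univ.filter fun y => D v y := by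
        intro y hy
        simp only [Finset.mem_insert, Finset.mem_singleton] at hy
        simp only [Finset.mem_filter, Finset.mem_univ, true_and]
        rcases hy with e | e | e <;> rw [e]
        · exact hDv u1 hvu1
        · exact hDv u2 hvu2
        · exact hDv u3 hvu3
      have hcard3 : ({u1, u2, u3} : Finset V).card = 3 := by
        rw [Finset.card_insert_of_notMem (by simp [hu12, hu13]),
          Finset.card_insert_of_notMem (by simp [hu23]), Finset.card_singleton]
      rw [← hcard3]
      exact Finset.card_le_card hsub3
    have hgoodr : Good D S r :=
      ⟨(hsub v r hvr).2.2, v, hDv r hvr, hrins, hvout⟩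
    -- the induction step
    have hstep : ∀ x : V, Good D S x →
        3 ≤ (Finset.univ.filter fun y => D' x y).card ∧ ∀ a, D' x a → Good D S a := by
      rintro x ⟨hxS, p, hpx, hins, hpout⟩
      have hpout' : 3 ≤ (Finset.univ.filter fun y => D p y).card := by
        rw [← hsetfin]; exact hpout
      have hdeg4 := mindeg x hxS
      have hinle : (Finset.univ.filter fun y => D' y x).card ≤ 1 := by
        apply Finset.card_le_one.2
        intro a ha b hb
        simp only [Finset.mem_filter, Finset.mem_univ, true_and] at ha hb
        rw [hins a (hsub a x ha).1, hins b (hsub b x hb).1]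
      have hD'out : 3 ≤ (Finset.univ.filter fun y => D' x y).card := by
        have hsplit : (Finset.univ.filter fun y => y ≠ x ∧ (D' x y ∨ D' y x)) ⊆
            (Finset.univ.filter fun y => D' x y) ∪ (Finset.univ.filter fun y => D' y x) := by
          intro y hy
          simp only [Finset.mem_filter, Finset.mem_univ, true_and, Finset.mem_union] at hy ⊢
          tauto
        have h1 := Finset.card_le_card hsplit
        have h2 := Finset.card_union_le (Finset.univ.filter fun y => D' x y)
          (Finset.univ.filter fun y => D' y x)
        omega
      have hDout : 3 ≤ (Finset.univ.filter fun y => D x y).card := by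
        refine le_trans hD'out (Finset.card_le_card ?_)
        intro y hy
        simp only [Finset.mem_filter, Finset.mem_univ, true_and] at hy ⊢
        exact (hsub x y hy).1
      refine ⟨hD'out, ?_⟩
      intro a ha'
      have haD : D x a := (hsub x a ha').1
      have haS : a ∈ S := (hsub x a ha').2.2
      refine ⟨haS, x, haD, ?_, by rw [hsetfin]; exact hDout⟩
      intro t hta
      by_contra htx
      have hxt' : x ≠ t := fun e => htx e.symm
      have hta' : t ≠ a := fun e => noloop a (by rw [e] at hta; exact hta)
      set Od := Finset.univ.filter fun y => D x y with hOd
      have haOd : a ∈ Od := by simp [hOd, haD]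
      set E := (Od.erase a).erase t with hE
      by_cases hE2 : 2 ≤ E.card
      · -- two other out-neighbors of x : t's out-set is {a, x}, forcing t = p
        obtain ⟨x1, hx1, x2, hx2, hx1x2⟩ := Finset.one_lt_card.1 hE2
        have hx1p : D x x1 ∧ x1 ≠ a ∧ x1 ≠ t := by
          simp only [hE, Finset.mem_erase, hOd, Finset.mem_filter, Finset.mem_univ,
            true_and] at hx1
          exact ⟨hx1.2.2, hx1.2.1, hx1.1⟩
        have hx2p : D x x2 ∧ x2 ≠ a ∧ x2 ≠ t := by
          simp only [hE, Finset.mem_erase, hOd, Finset.mem_filter, Finset.mem_univ,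
            true_and] at hx2
          exact ⟨hx2.2.2, hx2.2.1, hx2.1⟩
        have wN : ∀ w, D t w → w = a ∨ w = x := by
          intro w hw
          by_cases hwa : w = a
          · exact Or.inl hwa
          rcases key3 x t a x1 w haD hta hx1p.1 hw hxt' hx1p.2.1 hwa with e | e | e
          · exact absurd e hx1p.2.2
          · rcases key3 x t a x2 w haD hta hx2p.1 hw hxt' hx2p.2.1 hwa with f | f | f
            · exact absurd f hx2p.2.2
            · exact absurd (e.trans f.symm) hx1x2
            · exact Or.inr f
          · exact Or.inr e
        have htxD : D t x := (bothOut t a x wN).2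
        have htp : t = p := hins t htxD
        have hpsub : (Finset.univ.filter fun y => D p y) ⊆ ({a, x} : Finset V) := by
          intro y hy
          simp only [Finset.mem_filter, Finset.mem_univ, true_and] at hy
          rcases wN y (by rw [htp]; exact hy) with e | e <;> simp [e]
        have := Finset.card_le_card hpsub
        have hax2 : ({a, x} : Finset V).card ≤ 2 :=
          le_trans (Finset.card_insert_le a {x}) (by simp)
        omega
      · -- x has exactly three out-neighbors a, t, c
        push_neg at hE2
        have hEle : E.card ≤ 1 := by omega
        have hcardOd : 3 ≤ Od.card := hDout
        have htOd : t ∈ Od := by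
          by_contra htn
          have htn' : t ∉ Od.erase a := fun h => htn (Finset.mem_of_mem_erase h)
          have hEeq : E = Od.erase a := by rw [hE, Finset.erase_eq_of_notMem htn']
          rw [hEeq] at hEle
          have hce := Finset.card_erase_of_mem haOd
          omega
        have hxt : D x t := by
          simp only [hOd, Finset.mem_filter, Finset.mem_univ, true_and] at htOd
          exact htOd
        have htOda : t ∈ Od.erase a := Finset.mem_erase.2 ⟨hta', htOd⟩
        have hcard1 : E.card = 1 := by
          have h1 := Finset.card_erase_of_mem haOd
          have h2 : E.card = (Od.erase a).card - 1 := by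
            rw [hE]; exact Finset.card_erase_of_mem htOda
          omega
        obtain ⟨c, hc⟩ := Finset.card_eq_one.1 hcard1
        have hcmem : c ∈ E := by rw [hc]; exact Finset.mem_singleton_self c
        have hcp : D x c ∧ c ≠ a ∧ c ≠ t := by
          simp only [hE, Finset.mem_erase, hOd, Finset.mem_filter, Finset.mem_univ,
            true_and] at hcmem
          exact ⟨hcmem.2.2, hcmem.2.1, hcmem.1⟩
        -- out-neighborhood of t is inside {a, c}
        have htout : ∀ w, D t w → w = a ∨ w = c := by
          intro w hw
          by_cases hwa : w = a
          · exact Or.inl hwa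
          rcases key3 x t a c w haD hta hcp.1 hw hxt' hcp.2.1 hwa with e | e | e
          · exact absurd e hcp.2.2
          · exact Or.inr e.symm
          · exfalso
            rw [e] at hw
            exact hasym x t hxt hw
        have htc : D t c := (bothOut t a c htout).2
        -- t is in S
        have hOdcard : Od.card = 3 := by
          have h1 := Finset.card_erase_of_mem haOd
          have h2 : E.card = (Od.erase a).card - 1 := by
            rw [hE]; exact Finset.card_erase_of_mem htOda
          omega
        have hOd'sub : (Finset.univ.filter fun y => D' x y) ⊆ Od := by
          intro y hy
          simp only [Finset.mem_filter, Finset.mem_univ, true_and, hOd] at hy ⊢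
          exact (hsub x y hy).1
        have hOdeq : (Finset.univ.filter fun y => D' x y) = Od :=
          Finset.eq_of_subset_of_card_le hOd'sub (by omega)
        have htS : t ∈ S := by
          have : t ∈ Finset.univ.filter fun y => D' x y := by rw [hOdeq]; exact htOd
          simp only [Finset.mem_filter, Finset.mem_univ, true_and] at this
          exact (hsub x t this).2.2
        -- the only in-neighbor of t is x
        have htins : ∀ s', D s' t → s' = x := by
          intro s' hs't
          by_contra hs'x
          have hs'a : s' ≠ a := fun e => hasym t a hta (by rw [e] at hs't; exact hs't)
          have hs'c : s' ≠ c := fun e => hasym t c htc (by rw [e] at hs't; exact hs't)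
          have hs'out : ∀ w', D s' w' → w' = t ∨ w' = x := by
            intro w' hw'
            by_cases hw't : w' = t
            · exact Or.inl hw't
            have hxs' : x ≠ s' := fun e => hs'x e.symm
            rcases key3 x s' t a w' hxt hs't haD hw' hxs' hta'.symm hw't with e | e | e
            · exact absurd e.symm hs'a
            · rcases key3 x s' t c w' hxt hs't hcp.1 hw' hxs' hcp.2.2 hw't with f | f | f
              · exact absurd f.symm hs'c
              · exact absurd (f.trans e.symm) hcp.2.1
              · exact Or.inr f
            · exact Or.inr e
          have hs'xD : D s' x := (bothOut s' t x hs'out).2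
          have hs'p : s' = p := hins s' hs'xD
          have hpsub : (Finset.univ.filter fun y => D p y) ⊆ ({t, x} : Finset V) := by
            intro y hy
            simp only [Finset.mem_filter, Finset.mem_univ, true_and] at hy
            rcases hs'out y (by rw [hs'p]; exact hy) with e | e <;> simp [e]
          have := Finset.card_le_card hpsub
          have htx2 : ({t, x} : Finset V).card ≤ 2 :=
            le_trans (Finset.card_insert_le t {x}) (by simp)
          omega
        -- degree of t is at most 3, contradiction
        have hdegt := mindeg t htS
        have htsub : (Finset.univ.filter fun y => y ≠ t ∧ (D' t y ∨ D' y t)) ⊆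
            ({a, c, x} : Finset V) := by
          intro y hy
          simp only [Finset.mem_filter, Finset.mem_univ, true_and] at hy
          obtain ⟨hyt, hy2⟩ := hy
          rcases hy2 with h | h
          · rcases htout y (hsub t y h).1 with e | e <;> simp [e]
          · have := htins y (hsub y t h).1
            simp [this]
        have := Finset.card_le_card htsub
        have hacx : ({a, c, x} : Finset V).card ≤ 3 :=
          le_trans (Finset.card_insert_le a {c, x})
            (Nat.succ_le_succ (le_trans (Finset.card_insert_le c {x}) (by simp)))
        omega
    -- counting argument on the set of vertices reachable from r via D'
    set C : Set V := {x | Relation.ReflTransGen (fun a b => D' a b) r x} with hC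
    have hrC : r ∈ C := Relation.ReflTransGen.refl
    have hclosed : ∀ x ∈ C, ∀ y, D' x y → y ∈ C := fun x hx y hxy =>
      Relation.ReflTransGen.tail hx hxy
    have hCgood : ∀ x ∈ C, Good D S x := by
      intro x hx
      simp only [hC, Set.mem_setOf_eq] at hx
      induction hx with
      | refl => exact hgoodr
      | tail hab hbc ih => exact (hstep _ ih).2 _ hbc
    set Cf := Finset.univ.filter fun x => x ∈ C with hCf
    have hrCf : r ∈ Cf := by simp [hCf, hrC]
    set B := Cf.biUnion
      (fun x => (Finset.univ.filter fun y => D' x y).image (fun y => (x, y))) with hBdef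
    have hdisj : ∀ x ∈ Cf, ∀ x' ∈ Cf, x ≠ x' →
        Disjoint ((Finset.univ.filter fun y => D' x y).image (fun y => (x, y)))
          ((Finset.univ.filter fun y => D' x' y).image (fun y => (x', y))) := by
      intro x _ x' _ hxx'
      rw [Finset.disjoint_left]
      intro p hp hp'
      simp only [Finset.mem_image, Finset.mem_filter, Finset.mem_univ, true_and] at hp hp'
      obtain ⟨y, _, hy2⟩ := hp
      obtain ⟨y', _, hy2'⟩ := hp'
      rw [← hy2] at hy2'
      exact hxx' (congrArg Prod.fst hy2').symm
    have hBcard : B.card = ∑ x ∈ Cf, (Finset.univ.filter fun y => D' x y).card := by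
      rw [hBdef, Finset.card_biUnion hdisj]
      refine Finset.sum_congr rfl fun x _ => ?_
      exact Finset.card_image_of_injective _ (fun y1 y2 h => (Prod.mk.injEq _ _ _ _ ▸ h).2)
    have hBlower : 3 * Cf.card ≤ B.card := by
      rw [hBcard]
      calc 3 * Cf.card = ∑ _x ∈ Cf, 3 := by rw [Finset.sum_const, smul_eq_mul, mul_comm]
        _ ≤ ∑ x ∈ Cf, (Finset.univ.filter fun y => D' x y).card := by
            refine Finset.sum_le_sum fun x hx => ?_
            have hxC : x ∈ C := by simpa [hCf] using hx
            exact (hstep x (hCgood x hxC)).1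
    have hmemB : ∀ p ∈ B, p.1 ∈ C ∧ p.2 ∈ C ∧ D' p.1 p.2 := by
      intro p hp
      simp only [hBdef, Finset.mem_biUnion, Finset.mem_image, Finset.mem_filter,
        Finset.mem_univ, true_and, hCf] at hp
      obtain ⟨x, hx, y, hy, hxy⟩ := hp
      rw [← hxy]
      exact ⟨hx, hclosed x hx y hy, hy⟩
    have hinjsnd : Set.InjOn Prod.snd (B : Set (V × V)) := by
      intro p1 h1 p2 h2 hsnd
      have hp1 := hmemB p1 (by simpa using h1)
      have hp2 := hmemB p2 (by simpa using h2)
      obtain ⟨_, p, _, hins, _⟩ := hCgood p1.2 hp1.2.1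
      have e1 : p1.1 = p := hins p1.1 (hsub _ _ hp1.2.2).1
      have e2 : p2.1 = p := hins p2.1 (by rw [hsnd]; exact (hsub _ _ hp2.2.2).1)
      exact Prod.ext (e1.trans e2.symm) hsnd
    have hBupper : B.card ≤ Cf.card := by
      rw [← Finset.card_image_of_injOn hinjsnd]
      refine Finset.card_le_card ?_
      intro y hy
      simp only [Finset.mem_image] at hy
      obtain ⟨p, hp, hpy⟩ := hy
      have := (hmemB p hp).2.1
      rw [hpy] at this
      simp [hCf, this]
    have hCfpos : 1 ≤ Cf.card := Finset.card_pos.2 ⟨r, hrCf⟩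
    omega
end

section
/- (Gallai–Roy) Every digraph D whose underlying graph has chromatic number n contains a directed path with n vertices (i.e. of length n-1). -/
open Relation

/-- Adding one arc to a relation: what transitive closure looks like. -/
lemma gr_transGen_insert {V : Type*} {M : V → V → Prop} {a b x y : V}
    (h : TransGen (fun p q => M p q ∨ (p = a ∧ q = b)) x y) :
    TransGen M x y ∨ (ReflTransGen M x a ∧ ReflTransGen M b y) := by
  induction h with
  | single h =>
    rcases h with h | ⟨rfl, rfl⟩
    · exact Or.inl (.single h)
    · exact Or.inr ⟨.refl, .refl⟩
  | tail h step ih =>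
    rcases step with step | ⟨rfl, rfl⟩
    · rcases ih with h1 | ⟨h1, h2⟩
      · exact Or.inl (h1.tail step)
      · exact Or.inr ⟨h1, h2.tail step⟩
    · rcases ih with h1 | ⟨h1, h2⟩
      · exact Or.inr ⟨h1.to_reflTransGen, .refl⟩
      · exact Or.inr ⟨h1, .refl⟩

/-- Transitive closure of a union of a chain of relations. -/
lemma gr_transGen_sUnion {V : Type*} {c : Set (Set (V × V))} (hc : IsChain (· ⊆ ·) c)
    {x y : V} (h : TransGen (fun a b => (a, b) ∈ ⋃₀ c) x y) :
    ∃ s ∈ c, TransGen (fun a b => (a, b) ∈ s) x y := by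
  induction h with
  | single h =>
    obtain ⟨s, hs, hm⟩ := h
    exact ⟨s, hs, .single hm⟩
  | tail _ h₂ ih =>
    obtain ⟨s, hs, hts⟩ := ih
    obtain ⟨t, ht, hm⟩ := h₂
    rcases hc.total hs ht with hst | hts'
    · exact ⟨t, ht, (TransGen.mono (fun a b hab => hst hab) _ _ hts).tail hm⟩
    · exact ⟨s, hs, hts.tail (hts' hm)⟩

open Classical in
/-- Height function of a well-founded relation: length of longest chain ending at `v`. -/
noncomputable def grH {V : Type*} [Fintype V] (R : V → V → Prop) (wf : WellFounded R) :
    V → ℕ :=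
  wf.fix fun v ih => Finset.univ.sup fun u => if hu : R u v then ih u hu + 1 else 0

open Classical in
lemma grH_eq {V : Type*} [Fintype V] (R : V → V → Prop) (wf : WellFounded R) (v : V) :
    grH R wf v = Finset.univ.sup fun u => if _ : R u v then grH R wf u + 1 else 0 :=
  wf.fix_eq _ v

lemma grH_lt {V : Type*} [Fintype V] {R : V → V → Prop} (wf : WellFounded R) {u v : V}
    (h : R u v) : grH R wf u < grH R wf v := by
  classical
  have hle : grH R wf u + 1 ≤ Finset.univ.sup fun w => if _ : R w v then grH R wf w + 1 else 0 := by
    have h2 := Finset.le_sup (f := fun w => if _ : R w v then grH R wf w + 1 else 0)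
      (Finset.mem_univ u)
    simpa [h] using h2
  rw [grH_eq R wf v]
  omega

lemma grH_lt_of_transGen {V : Type*} [Fintype V] {R : V → V → Prop} (wf : WellFounded R)
    {u v : V} (h : TransGen R u v) : grH R wf u < grH R wf v := by
  induction h with
  | single h => exact grH_lt wf h
  | tail _ step ih => exact ih.trans (grH_lt wf step)

lemma grH_path {V : Type*} [Fintype V] {R : V → V → Prop} (wf : WellFounded R)
    (hirr : Irreflexive (TransGen R)) :
    ∀ k v, grH R wf v = k → ∃ l : List V, l.Chain' R ∧ l.Nodup ∧
      l.length = k + 1 ∧ l.getLast? = some v ∧ ∀ x ∈ l, ReflTransGen R x v := by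
  classical
  intro k
  induction k using Nat.strong_induction_on with
  | _ k ih =>
    intro v hv
    rcases k with _ | m
    · refine ⟨[v], by simp [List.Chain'], by simp, by simp, by simp, ?_⟩
      intro x hx
      simp only [List.mem_singleton] at hx
      subst hx
      exact .refl
    · have hne : (Finset.univ : Finset V).Nonempty := ⟨v, Finset.mem_univ v⟩
      obtain ⟨u, -, hu⟩ := Finset.exists_mem_eq_sup Finset.univ hne
        (fun u => if _ : R u v then grH R wf u + 1 else 0)
      have hval : (if _ : R u v then grH R wf u + 1 else 0) = m + 1 := by
        rw [← hu, ← grH_eq, hv]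
      by_cases hRuv : R u v
      · rw [dif_pos hRuv] at hval
        have hum : grH R wf u = m := by omega
        obtain ⟨l, hchain, hnodup, hlen, hlast, hall⟩ := ih m (Nat.lt_succ_self m) u hum
        refine ⟨l ++ [v], ?_, ?_, by simp [hlen], by simp, ?_⟩
        · rw [List.Chain', List.isChain_append]
          refine ⟨hchain, by simp, ?_⟩
          intro x hx y hy
          rw [hlast] at hx
          simp only [List.head?_cons, Option.mem_def, Option.some.injEq] at hx hy
          subst hx; subst hy; exact hRuv
        · rw [List.nodup_append]
          refine ⟨hnodup, List.nodup_singleton v, ?_⟩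
          intro x hx y hx' hxy; subst hxy
          simp only [List.mem_singleton] at hx'
          exact hirr v (TransGen.tail' (hall _ (hx' ▸ hx)) hRuv)
        · intro x hx
          rcases List.mem_append.mp hx with hx | hx
          · exact (hall x hx).tail hRuv
          · simp only [List.mem_singleton] at hx
            subst hx; exact .refl
      · rw [dif_neg hRuv] at hval; omega

/-- Gallai–Roy. -/
theorem stmt_9 {V : Type*} [Fintype V] (D : V → V → Prop)
    (hasym : ∀ a b, D a b → ¬ D b a) (n : ℕ)
    (hchrom : (underlyingGraph D).chromaticNumber = n) :
    ∃ f : Fin n → V, Function.Injective f ∧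
      ∀ i j : Fin n, (j : ℕ) = (i : ℕ) + 1 → D (f i) (f j) := by
  classical
  rcases n with _ | m₀
  · exact ⟨Fin.elim0, fun i => i.elim0, fun i => i.elim0⟩
  -- V is nonempty
  have hV : Nonempty V := by
    by_contra h
    haveI := not_nonempty_iff.mp h
    have h0 : (underlyingGraph D).chromaticNumber ≤ (0 : ℕ) :=
      SimpleGraph.Colorable.chromaticNumber_le
        ⟨SimpleGraph.Coloring.mk (fun v => isEmptyElim (α := V) v)
          (fun {a} _ _ => isEmptyElim a)⟩
    rw [hchrom] at h0
    simp at h0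
  -- Zorn: a maximal acyclic subrelation of D
  set T : Set (V × V) := {p | D p.1 p.2} with hT
  set S : Set (Set (V × V)) :=
    {s | s ⊆ T ∧ Irreflexive (TransGen fun x y => (x, y) ∈ s)} with hS
  have hzorn : ∃ M, Maximal (· ∈ S) M := by
    apply zorn_subset
    intro c hcS hc
    rcases Set.eq_empty_or_nonempty c with rfl | hcne
    · exact ⟨∅, ⟨Set.empty_subset _, fun x hx =>
        match hx with | .single h => h | .tail _ h => h⟩, by simp⟩
    · refine ⟨⋃₀ c, ⟨?_, ?_⟩, fun s hs => Set.subset_sUnion_of_mem hs⟩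
      · intro p hp
        obtain ⟨s, hs, hps⟩ := hp
        exact (hcS hs).1 hps
      · intro x hx
        obtain ⟨s, hs, hts⟩ := gr_transGen_sUnion hc hx
        exact (hcS hs).2 x hts
  obtain ⟨M, hM⟩ := hzorn
  set R : V → V → Prop := fun a b => (a, b) ∈ M with hR
  have hMT : ∀ a b, R a b → D a b := fun a b h => hM.prop.1 h
  have hirr : Irreflexive (TransGen R) := hM.prop.2
  -- maximality: every arc of D either in R or closes a path of R
  have key : ∀ a b, D a b → R a b ∨ ReflTransGen R b a := by
    intro a b hab
    by_cases hm : R a b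
    · exact Or.inl hm
    · right
      have hnot : insert (a, b) M ∉ S := by
        intro hmem
        exact hm (hM.2 hmem (Set.subset_insert _ _) (Set.mem_insert _ _))
      have hsub : insert (a, b) M ⊆ T := by
        intro p hp
        rcases Set.mem_insert_iff.mp hp with rfl | hp
        · exact hab
        · exact hM.prop.1 hp
      have hcyc : ¬ Irreflexive (TransGen fun x y => (x, y) ∈ insert (a, b) M) := by
        intro hi; exact hnot ⟨hsub, hi⟩
      simp only [Irreflexive, not_forall, not_not] at hcyc
      obtain ⟨x, hx⟩ := hcyc
      have hx' : TransGen (fun p q => R p q ∨ (p = a ∧ q = b)) x x := by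
        refine TransGen.mono (fun p q hpq => ?_) _ _ hx
        rcases Set.mem_insert_iff.mp hpq with h | h
        · exact Or.inr ⟨congrArg Prod.fst h, congrArg Prod.snd h⟩
        · exact Or.inl h
      rcases gr_transGen_insert hx' with h | ⟨h1, h2⟩
      · exact absurd h (hirr x)
      · exact h2.trans h1
  -- well-foundedness
  haveI : IsTrans V (TransGen R) := ⟨fun _ _ _ h1 h2 => h1.trans h2⟩
  haveI : IsIrrefl V (TransGen R) := ⟨hirr⟩
  have wfT := Finite.wellFounded_of_trans_of_irrefl (TransGen R)
  have wfR : WellFounded R := Subrelation.wf (fun {x y} h => TransGen.single h) wfT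
  set H : V → ℕ := grH R wfR with hH
  -- heights distinguish adjacent vertices
  have hHD : ∀ x y : V, D x y → x ≠ y → H x ≠ H y := by
    intro x y hxy hne
    rcases key x y hxy with h | h
    · exact Nat.ne_of_lt (grH_lt wfR h)
    · rcases reflTransGen_iff_eq_or_transGen.mp h with rfl | h
      · exact absurd rfl hne
      · exact (Nat.ne_of_lt (grH_lt_of_transGen wfR h)).symm
  set m := Finset.univ.sup H with hm
  -- coloring with m+1 colors
  have hcol : (underlyingGraph D).Colorable (m + 1) := by
    refine ⟨SimpleGraph.Coloring.mk
      (fun v => ⟨H v, Nat.lt_succ_of_le (Finset.le_sup (Finset.mem_univ v))⟩) ?_⟩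
    intro a b hadj hEq
    have hEq' : H a = H b := congrArg Fin.val hEq
    replace hadj : a ≠ b ∧ (D a b ∨ D b a) := hadj
    rcases hadj.2 with h | h
    · exact hHD a b h hadj.1 hEq'
    · exact hHD b a h hadj.1.symm hEq'.symm
  have hle : ((m₀ + 1 : ℕ) : ℕ∞) ≤ (m + 1 : ℕ) := hchrom ▸ hcol.chromaticNumber_le
  have hle' : m₀ + 1 ≤ m + 1 := by exact_mod_cast hle
  -- a vertex of maximal height and the corresponding path
  obtain ⟨v, -, hv⟩ := Finset.exists_mem_eq_sup Finset.univ
    (Finset.univ_nonempty (α := V)) H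
  obtain ⟨l, hchain, hnodup, hlen, -, -⟩ := grH_path wfR hirr (H v) v rfl
  have hHv : H v = m := hv.symm
  have hlenl : m₀ + 1 ≤ l.length := by omega
  set l' := l.take (m₀ + 1) with hl'
  have hlen' : l'.length = m₀ + 1 := by
    rw [hl', List.length_take]
    omega
  have hchain' : l'.Chain' R := hchain.take _
  have hnodup' : l'.Nodup := hnodup.sublist (List.take_sublist _ _)
  refine ⟨fun i => l'.get ⟨i, by rw [hlen']; exact i.isLt⟩, ?_, ?_⟩
  · intro i j hij
    have := List.nodup_iff_injective_get.mp hnodup' hij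
    have hval : (i : ℕ) = (j : ℕ) := by injection this
    exact Fin.ext hval
  · intro i j hij
    have hj : (i : ℕ) + 1 < l'.length := by rw [hlen', ← hij]; exact j.isLt
    have := List.isChain_iff_getElem.mp hchain' i (by omega)
    apply hMT
    convert this using 2
    all_goals simp [hij]
end

section
/- Let F be a maximal spanning out-forest of a digraph D, and let v → w be an arc of D with v of level i and w of level j in F. If k ≤ i < j - l, then D contains a path with two blocks P(k,l). -/
/-- A directed chain (directed path) in `F`, given by an injective enumeration. -/
def IsDirChain {V : Type*} (F : V → V → Prop) {n : ℕ} (f : Fin (n + 1) → V) : Prop :=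
  Function.Injective f ∧ ∀ i j : Fin (n + 1), (j : ℕ) = (i : ℕ) + 1 → F (f i) (f j)

/-- There is a directed path of `F` with `n+1` vertices ending at `v`. -/
def EndsAt {V : Type*} (F : V → V → Prop) (n : ℕ) (v : V) : Prop :=
  ∃ f : Fin (n + 1) → V, IsDirChain F f ∧ f (Fin.last n) = v

/-- The level of `v` in `F` is `i`: the order of a longest directed path of `F`
ending at `v` equals `i`. -/
def LevelIs {V : Type*} (F : V → V → Prop) (v : V) (i : ℕ) : Prop :=
  1 ≤ i ∧ EndsAt F (i - 1) v ∧ ∀ m, EndsAt F m v → m + 1 ≤ i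

/-- There is a directed path in `F` from `u` to `v`. -/
def DirReach {V : Type*} (F : V → V → Prop) (u v : V) : Prop :=
  ∃ (n : ℕ) (f : Fin (n + 1) → V), IsDirChain F f ∧ f 0 = u ∧ f (Fin.last n) = v

/-- `F` is an out-forest: every vertex has in-degree at most one and the
underlying graph is acyclic (so every component is an out-branching). -/
def IsOutForest {V : Type*} (F : V → V → Prop) : Prop :=
  (∀ a b c, F a c → F b c → a = b) ∧ (underlyingGraph F).IsAcyclic

/-- `F` is a maximal spanning out-forest of `D`: a spanning subdigraph of `D`
which is an out-forest, such that for every arc `x → y` of `D` with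
`l_F(x) ≥ l_F(y)` there is a directed path from `y` to `x` in `F`. -/
def IsMaxSpanningOutForest {V : Type*} (D F : V → V → Prop) : Prop :=
  (∀ a b, F a b → D a b) ∧ IsOutForest F ∧
    ∀ x y, D x y → ∀ i j, LevelIs F x i → LevelIs F y j → j ≤ i → DirReach F y x

/-- `D` contains a path with two blocks `P(k,l)`: `k` forward arcs followed by
`l` backward arcs. -/
def HasTwoBlockPath {V : Type*} (D : V → V → Prop) (k l : ℕ) : Prop :=
  ∃ f : Fin (k + l + 1) → V, Function.Injective f ∧
    (∀ i j : Fin (k + l + 1), (j : ℕ) = (i : ℕ) + 1 → (i : ℕ) < k → D (f i) (f j)) ∧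
    (∀ i j : Fin (k + l + 1), (j : ℕ) = (i : ℕ) + 1 → k ≤ (i : ℕ) → D (f j) (f i))

section Aux
variable {V : Type*} {F : V → V → Prop}

lemma chain_back_unique (hpred : ∀ a b c, F a c → F b c → a = b)
    {n n' : ℕ} {f : Fin (n+1) → V} {g : Fin (n'+1) → V}
    (hf : ∀ i j : Fin (n+1), (j : ℕ) = (i : ℕ) + 1 → F (f i) (f j))
    (hg : ∀ i j : Fin (n'+1), (j : ℕ) = (i : ℕ) + 1 → F (g i) (g j))
    (hend : f (Fin.last n) = g (Fin.last n')) :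
    ∀ t, (h1 : t ≤ n) → (h2 : t ≤ n') →
      f ⟨n - t, by omega⟩ = g ⟨n' - t, by omega⟩ := by
  intro t
  induction t with
  | zero =>
    intro _ _
    simpa [Fin.last] using hend
  | succ t ih =>
    intro h1 h2
    have e := ih (by omega) (by omega)
    have a1 : F (f ⟨n - (t+1), by omega⟩) (f ⟨n - t, by omega⟩) :=
      hf _ _ (by simp; omega)
    have a2 : F (g ⟨n' - (t+1), by omega⟩) (g ⟨n' - t, by omega⟩) :=
      hg _ _ (by simp; omega)
    rw [e] at a1
    exact hpred _ _ _ a1 a2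

lemma walk_of_chain :
    ∀ (n : ℕ) (f : Fin (n+1) → V), IsDirChain F f → ∀ a b, f 0 = a → f (Fin.last n) = b →
    ∃ p : (underlyingGraph F).Walk a b, p.support = List.ofFn f ∧ p.length = n := by
  intro n
  induction n with
  | zero =>
    intro f hc a b ha hb
    have hab : a = b := by rw [← ha, ← hb]; rfl
    subst hab
    exact ⟨SimpleGraph.Walk.nil, by simp [← ha, List.ofFn_succ], rfl⟩
  | succ n ih =>
    intro f hc a b ha hb
    subst ha
    have hc' : IsDirChain F (f ∘ Fin.succ) := by
      refine ⟨hc.1.comp (Fin.succ_injective _), ?_⟩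
      intro i j hij
      exact hc.2 i.succ j.succ (by simp [Fin.val_succ]; omega)
    obtain ⟨p', hsup, hlen⟩ := ih (f ∘ Fin.succ) hc' (f (Fin.succ 0)) b rfl
      (by simp only [Function.comp, Fin.succ_last]; exact hb)
    have hadj : (underlyingGraph F).Adj (f 0) (f (Fin.succ 0)) := by
      refine ⟨?_, Or.inl (hc.2 0 (Fin.succ 0) (by simp))⟩
      intro h
      exact (Fin.succ_ne_zero 0) (hc.1 h.symm)
    refine ⟨SimpleGraph.Walk.cons hadj p', ?_, ?_⟩
    · rw [SimpleGraph.Walk.support_cons, hsup]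
      simp [List.ofFn_succ, Function.comp]
    · rw [SimpleGraph.Walk.length_cons, hlen]

lemma no_dicycle (hirr2 : ∀ a b, F a b → ¬ F b a)
    (hacyc : (underlyingGraph F).IsAcyclic)
    {n : ℕ} (c : Fin (n+1) → V) (hc : IsDirChain F c)
    (hcyc : F (c (Fin.last n)) (c 0)) : False := by
  rcases Nat.eq_zero_or_pos n with hn | hn
  · subst hn
    exact hirr2 _ _ hcyc hcyc
  · have hne : c 0 ≠ c (Fin.last n) := by
      intro h
      have := hc.1 h
      simp [Fin.ext_iff, Fin.last] at this
      omega
    have hadj : (underlyingGraph F).Adj (c 0) (c (Fin.last n)) :=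
      ⟨hne, Or.inr hcyc⟩
    obtain ⟨p, hsup, hlen⟩ := walk_of_chain n c hc (c 0) (c (Fin.last n)) rfl rfl
    have hpath : p.IsPath := by
      rw [SimpleGraph.Walk.isPath_def, hsup]
      exact List.nodup_ofFn.mpr hc.1
    have hq : (SimpleGraph.Path.singleton hadj : (underlyingGraph F).Path _ _) = ⟨p, hpath⟩ :=
      SimpleGraph.isAcyclic_iff_path_unique.mp hacyc _ _
    have hv : (SimpleGraph.Path.singleton hadj : (underlyingGraph F).Path _ _).1 = p :=
      congrArg Subtype.val hq
    have hlen1 : p.length = 1 := by rw [← hv]; rfl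
    have hn1 : n = 1 := by rw [← hlen, hlen1]
    subst hn1
    have h01 : F (c 0) (c 1) := hc.2 0 1 (by simp)
    have h10 : F (c 1) (c 0) := by
      have : (Fin.last 1 : Fin 2) = 1 := rfl
      rwa [this] at hcyc
    exact hirr2 _ _ h01 h10

end Aux

section Aux2
variable {V : Type*} {F : V → V → Prop}

lemma level_of_chain (hpred : ∀ a b c, F a c → F b c → a = b)
    (hirr2 : ∀ a b, F a b → ¬ F b a)
    (hacyc : (underlyingGraph F).IsAcyclic)
    {x : V} {j : ℕ} (hx : LevelIs F x j)
    (g : Fin ((j-1)+1) → V) (hg : IsDirChain F g) (hgend : g (Fin.last (j-1)) = x)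
    (t : Fin ((j-1)+1)) : LevelIs F (g t) ((t:ℕ)+1) := by
  have hj1 : 1 ≤ j := hx.1
  have htb : (t:ℕ) < (j-1)+1 := t.isLt
  -- the restricted chain ending at g t
  set f' : Fin ((t:ℕ)+1) → V := fun r => g ⟨(r:ℕ), by omega⟩ with hf'
  have hf'c : IsDirChain F f' := by
    constructor
    · intro r s h
      have := hg.1 h
      simp only [Fin.mk.injEq] at this
      exact Fin.ext this
    · intro r s hrs
      exact hg.2 ⟨(r:ℕ), by omega⟩ ⟨(s:ℕ), by omega⟩ (by show (s:ℕ) = (r:ℕ)+1; omega)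
  have hf'e : f' (Fin.last (t:ℕ)) = g t := by
    show g ⟨((Fin.last (t:ℕ)):ℕ), _⟩ = g t
    congr 1
  refine ⟨by omega, ?_, ?_⟩
  · have : (t:ℕ) + 1 - 1 = (t:ℕ) := by omega
    rw [this]
    exact ⟨f', hf'c, hf'e⟩
  · intro m ⟨h, hhc, hhe⟩
    by_contra hcon
    have hm : (t:ℕ) + 1 ≤ m := by omega
    -- compare h with f'
    have hbu := chain_back_unique hpred hhc.2 hf'c.2 (by rw [hhe, hf'e]) (t:ℕ)
      (by omega) (by omega)
    have hbu0 : h ⟨m - (t:ℕ), by omega⟩ = g ⟨0, by omega⟩ := by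
      rw [hbu]
      show g _ = g _
      congr 1
      exact Fin.ext (by simp)
    have harc : F (h ⟨m - (t:ℕ) - 1, by omega⟩) (g ⟨0, by omega⟩) := by
      rw [← hbu0]
      exact hhc.2 _ _ (by show m - (t:ℕ) = m - (t:ℕ) - 1 + 1; omega)
    set y := h ⟨m - (t:ℕ) - 1, by omega⟩ with hy
    by_cases hyr : ∃ u : Fin ((j-1)+1), g u = y
    · obtain ⟨u, hu⟩ := hyr
      -- directed cycle g 0 ... g u → g 0
      set c : Fin ((u:ℕ)+1) → V := fun r => g ⟨(r:ℕ), by omega⟩ with hc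
      have hcc : IsDirChain F c := by
        constructor
        · intro r s hh
          have := hg.1 hh
          simp only [Fin.mk.injEq] at this
          exact Fin.ext this
        · intro r s hrs
          exact hg.2 ⟨(r:ℕ), by omega⟩ ⟨(s:ℕ), by omega⟩ (by show (s:ℕ) = (r:ℕ)+1; omega)
      refine no_dicycle hirr2 hacyc c hcc ?_
      have h1 : c (Fin.last (u:ℕ)) = g u := by
        show g _ = g u
        congr 1
      have h2 : c 0 = g ⟨0, by omega⟩ := by
        show g _ = g _
        congr 1
      rw [h1, h2, hu]
      exact harc
    · push_neg at hyr
      -- prepend y to g : longer chain ending at x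
      set g' : Fin ((j-1)+1+1) → V := fun s =>
        if hs : (s:ℕ) = 0 then y else g ⟨(s:ℕ) - 1, by omega⟩ with hg'
      have hg'c : IsDirChain F g' := by
        constructor
        · intro s s' hh
          simp only [hg'] at hh
          by_cases hs : (s:ℕ) = 0 <;> by_cases hs' : (s':ℕ) = 0
          · exact Fin.ext (by omega)
          · rw [dif_pos hs, dif_neg hs'] at hh
            exact absurd hh.symm (hyr _)
          · rw [dif_neg hs, dif_pos hs'] at hh
            exact absurd hh (hyr _)
          · rw [dif_neg hs, dif_neg hs'] at hh
            have := hg.1 hh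
            simp only [Fin.mk.injEq] at this
            exact Fin.ext (by omega)
        · intro s s' hss
          simp only [hg']
          by_cases hs : (s:ℕ) = 0
          · rw [dif_pos hs, dif_neg (by omega)]
            have : (⟨(s':ℕ) - 1, by omega⟩ : Fin ((j-1)+1)) = ⟨0, by omega⟩ :=
              Fin.ext (by show (s':ℕ) - 1 = 0; omega)
            rw [this]
            exact harc
          · rw [dif_neg hs, dif_neg (by omega)]
            exact hg.2 _ _ (by show (s':ℕ) - 1 = (s:ℕ) - 1 + 1; omega)
      have hg'e : g' (Fin.last ((j-1)+1)) = x := by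
        simp only [hg']
        rw [dif_neg (by simp)]
        rw [← hgend]
        congr 1
      have := hx.2.2 ((j-1)+1) ⟨g', hg'c, hg'e⟩
      omega

lemma level_unique {x : V} {m m' : ℕ}
    (h : LevelIs F x m) (h' : LevelIs F x m') : m = m' := by
  have a1 := h'.2.2 (m - 1) h.2.1
  have a2 := h.2.2 (m' - 1) h'.2.1
  have := h.1
  have := h'.1
  omega

end Aux2

theorem stmt_10 {V : Type*} (D F : V → V → Prop)
    (hasym : ∀ a b, D a b → ¬ D b a)
    (hF : IsMaxSpanningOutForest D F)
    (v w : V) (hvw : D v w) (k l i j : ℕ)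
    (hi : LevelIs F v i) (hj : LevelIs F w j)
    (h1 : k ≤ i) (h2 : i + l < j) :
    HasTwoBlockPath D k l := by
  obtain ⟨hFD, ⟨hpred, hacyc⟩, -⟩ := hF
  have hirr2 : ∀ a b, F a b → ¬ F b a := fun a b h h' => hasym a b (hFD a b h) (hFD b a h')
  have hi1 : 1 ≤ i := hi.1
  have hj1 : 1 ≤ j := hj.1
  obtain ⟨f, hfc, hfe⟩ := hi.2.1
  obtain ⟨g, hgc, hge⟩ := hj.2.1
  have Lf : ∀ t, LevelIs F (f t) ((t:ℕ)+1) :=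
    fun t => level_of_chain hpred hirr2 hacyc hi f hfc hfe t
  have Lg : ∀ t, LevelIs F (g t) ((t:ℕ)+1) :=
    fun t => level_of_chain hpred hirr2 hacyc hj g hgc hge t
  set X : Fin (k+l+1) → V := fun t =>
    if ht : (t:ℕ) < k then f ⟨i - k + (t:ℕ), by omega⟩
    else g ⟨j - 1 - ((t:ℕ) - k), by omega⟩ with hX
  have hXpos : ∀ (t : Fin (k+l+1)) (ht : (t:ℕ) < k), X t = f ⟨i - k + (t:ℕ), by omega⟩ := by
    intro t ht
    simp only [hX]
    rw [dif_pos ht]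
  have hXneg : ∀ (t : Fin (k+l+1)) (ht : ¬ (t:ℕ) < k),
      X t = g ⟨j - 1 - ((t:ℕ) - k), by omega⟩ := by
    intro t ht
    simp only [hX]
    rw [dif_neg ht]
  have keyL : ∀ (t : Fin (k+l+1)) (ht : (t:ℕ) < k), LevelIs F (X t) (i - k + (t:ℕ) + 1) := by
    intro t ht
    rw [hXpos t ht]
    exact Lf _
  have keyG : ∀ (t : Fin (k+l+1)) (ht : ¬ (t:ℕ) < k),
      LevelIs F (X t) (j - 1 - ((t:ℕ) - k) + 1) := by
    intro t ht
    rw [hXneg t ht]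
    exact Lg _
  refine ⟨X, ?_, ?_, ?_⟩
  · intro t t' heq
    by_cases ht : (t:ℕ) < k <;> by_cases ht' : (t':ℕ) < k
    · rw [hXpos t ht, hXpos t' ht'] at heq
      have := hfc.1 heq
      simp only [Fin.mk.injEq] at this
      exact Fin.ext (by omega)
    · have e1 := keyL t ht
      have e2 := keyG t' ht'
      rw [heq] at e1
      have := level_unique e1 e2
      have := t'.isLt
      omega
    · have e1 := keyG t ht
      have e2 := keyL t' ht'
      rw [heq] at e1
      have := level_unique e1 e2
      have := t.isLt
      omega
    · rw [hXneg t ht, hXneg t' ht'] at heq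
      have := hgc.1 heq
      simp only [Fin.mk.injEq] at this
      have := t.isLt
      have := t'.isLt
      exact Fin.ext (by omega)
  · intro a b hab ha
    rw [hXpos a ha]
    by_cases hb : (b:ℕ) < k
    · rw [hXpos b hb]
      exact hFD _ _ (hfc.2 _ _ (by show i - k + (b:ℕ) = i - k + (a:ℕ) + 1; omega))
    · rw [hXneg b hb]
      have e1 : (⟨i - k + (a:ℕ), by omega⟩ : Fin ((i-1)+1)) = Fin.last (i-1) :=
        Fin.ext (by show i - k + (a:ℕ) = i - 1; omega)
    
      have e2 : (⟨j - 1 - ((b:ℕ) - k), by omega⟩ : Fin ((j-1)+1)) = Fin.last (j-1) :=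
        Fin.ext (by show j - 1 - ((b:ℕ) - k) = j - 1; omega)
      rw [e1, e2, hfe, hge]
      exact hvw
  · intro a b hab ha
    have hbb := b.isLt
    rw [hXneg a (by omega), hXneg b (by omega)]
    exact hFD _ _ (hgc.2 _ _
      (by show j - 1 - ((a:ℕ) - k) = j - 1 - ((b:ℕ) - k) + 1; omega))
end

section
/- Let F be a maximal spanning out-forest of a digraph D, and let v → w be an arc of D with v of level i and w of level j in F. If k < j ≤ i - l, then D contains a path with two blocks P(k,l). -/
section Aux
variable {V : Type*} {D F : V → V → Prop}

lemma underlyingGraph_adj {a b : V} :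
    (underlyingGraph F).Adj a b ↔ a ≠ b ∧ (F a b ∨ F b a) := Iff.rfl

lemma chain_prefix {n : ℕ} {f : Fin (n+1) → V} (hf : IsDirChain F f) (t : Fin (n+1)) :
    EndsAt F (t : ℕ) (f t) := by
  refine ⟨fun s => f ⟨s.1, lt_of_le_of_lt (Nat.lt_succ_iff.mp s.2) t.2⟩, ⟨?_, ?_⟩, ?_⟩
  · intro a b hab
    have h2 := congrArg Fin.val (hf.1 hab)
    exact Fin.ext h2
  · intro a b hab
    exact hf.2 _ _ hab
  · exact congrArg f (Fin.ext (by simp))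

lemma walk_ofFn {G : SimpleGraph V} : ∀ {n : ℕ} (f : Fin (n+1) → V),
    (∀ i j : Fin (n+1), (j:ℕ) = (i:ℕ)+1 → G.Adj (f i) (f j)) →
    ∃ p : G.Walk (f 0) (f (Fin.last n)), p.support = List.ofFn f := by
  intro n
  induction n with
  | zero => exact fun f _ => ⟨SimpleGraph.Walk.nil, by simp [List.ofFn_succ]⟩
  | succ n ih =>
    intro f hadj
    obtain ⟨p, hp⟩ := ih (fun t => f t.succ)
      (fun a b hab => hadj a.succ b.succ (by simp [Fin.val_succ, hab]))
    have e1 : f ((0 : Fin (n+1)).succ) = f 1 := congrArg f (Fin.ext (by simp))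
    have e2 : f ((Fin.last n).succ) = f (Fin.last (n+1)) := congrArg f (Fin.ext (by simp))
    have hadj01 : G.Adj (f 0) (f 1) := hadj 0 1 (by simp)
    refine ⟨SimpleGraph.Walk.cons hadj01 ((p.copy e1 e2)), ?_⟩
    simp only [SimpleGraph.Walk.support_cons, SimpleGraph.Walk.support_copy, hp]
    rw [List.ofFn_succ (f := f), List.ofFn_succ]

lemma no_cycle_vertex (hasym : ∀ a b, D a b → ¬ D b a) (hFD : ∀ a b, F a b → D a b)
    (hac : (underlyingGraph F).IsAcyclic) {m : ℕ} {g : Fin (m+1) → V}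
    (hg : IsDirChain F g) {b : V} (hab : F (g (Fin.last m)) b) (s : Fin (m+1)) :
    g s ≠ b := by
  intro hs
  rcases Nat.lt_or_ge s.1 m with hsm | hsm
  · rcases Nat.lt_or_ge (s.1 + 1) m with hs1 | hs1
    · -- s + 2 ≤ m : cycle case
      have hd2 : 2 ≤ m - s.1 := by omega
      have hbound : ∀ t : Fin (m - s.1 + 1), s.1 + t.1 < m + 1 := by
        intro t; have := t.2; omega
      have hinj : Function.Injective (fun t : Fin (m - s.1 + 1) => g ⟨s.1 + t.1, hbound t⟩) := by
        intro a c hac2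
        have h2 := congrArg Fin.val (hg.1 hac2)
        simp only [] at h2
        exact Fin.ext (by omega)
      obtain ⟨p, hp⟩ := walk_ofFn (fun t : Fin (m - s.1 + 1) => g ⟨s.1 + t.1, hbound t⟩) (by
        intro a c hac2
        rw [underlyingGraph_adj]
        constructor
        · intro he
          have h2 := congrArg Fin.val (hg.1 he)
          simp only [] at h2
          omega
        · exact Or.inl (hg.2 _ _ (by simp [hac2]; omega)))
      have hpath : p.IsPath := by
        rw [SimpleGraph.Walk.isPath_def, hp, List.nodup_ofFn]
        exact hinj
      have e1 : g ⟨s.1 + ((0 : Fin (m - s.1 + 1)) : ℕ), hbound 0⟩ = b := by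
        rw [← hs]; exact congrArg g (Fin.ext (by simp))
      have e2 : g ⟨s.1 + ((Fin.last (m - s.1)) : ℕ), hbound _⟩ = g (Fin.last m) := by
        exact congrArg g (Fin.ext (by simp only [Fin.val_last]; omega))
      have hne : g ⟨s.1 + ((0 : Fin (m - s.1 + 1)) : ℕ), hbound 0⟩ ≠
          g ⟨s.1 + ((Fin.last (m - s.1)) : ℕ), hbound _⟩ := by
        intro he
        have h2 := congrArg Fin.val (hg.1 he)
        simp only [] at h2
        simp at h2
        omega
      have hadj2 : (underlyingGraph F).Adj (g ⟨s.1 + ((0 : Fin (m - s.1 + 1)) : ℕ), hbound 0⟩)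
          (g ⟨s.1 + ((Fin.last (m - s.1)) : ℕ), hbound _⟩) := by
        rw [underlyingGraph_adj]
        exact ⟨hne, Or.inr (by rw [e1, e2]; exact hab)⟩
      have hPeq := SimpleGraph.isAcyclic_iff_path_unique.mp hac
        (⟨p, hpath⟩ : (underlyingGraph F).Path _ _) (SimpleGraph.Path.singleton hadj2)
      have hsup := congrArg (fun q : (underlyingGraph F).Path _ _ => q.1.support.length) hPeq
      dsimp only at hsup
      rw [hp] at hsup
      simp only [SimpleGraph.Path.singleton, SimpleGraph.Walk.support_cons, SimpleGraph.Walk.support_nil] at hsup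
      simp [hp, SimpleGraph.Path.singleton, SimpleGraph.Walk.length_cons, SimpleGraph.Walk.length_nil] at hsup
      omega
    · -- s + 1 = m : 2-cycle
      have hm : s.1 + 1 = m := by omega
      have hF1 : F (g s) (g (Fin.last m)) := hg.2 _ _ (by simp [hm])
      rw [hs] at hF1
      exact hasym _ _ (hFD _ _ hab) (hFD _ _ hF1)
  · -- s = m : loop
    have hsl : s = Fin.last m := Fin.ext (by have := s.2; simp; omega)
    rw [hsl] at hs
    rw [hs] at hab
    exact hasym _ _ (hFD _ _ hab) (hFD _ _ hab)

lemma endsAt_succ (hasym : ∀ a b, D a b → ¬ D b a) (hFD : ∀ a b, F a b → D a b)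
    (hac : (underlyingGraph F).IsAcyclic) {a b : V} (hab : F a b) {m : ℕ}
    (h : EndsAt F m a) : EndsAt F (m+1) b := by
  obtain ⟨g, hg, glast⟩ := h
  rw [← glast] at hab
  have hbnot := no_cycle_vertex hasym hFD hac hg hab
  refine ⟨fun t => if h : (t:ℕ) < m+1 then g ⟨t, h⟩ else b, ⟨?_, ?_⟩, ?_⟩
  · intro t1 t2 he
    dsimp only at he
    by_cases h1 : (t1:ℕ) < m+1 <;> by_cases h2 : (t2:ℕ) < m+1
    · rw [dif_pos h1, dif_pos h2] at he
      have h3 := congrArg Fin.val (hg.1 he)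
      exact Fin.ext (by simpa using h3)
    · rw [dif_pos h1, dif_neg h2] at he
      exact absurd he (hbnot _)
    · rw [dif_neg h1, dif_pos h2] at he
      exact absurd he.symm (hbnot _)
    · have := t1.2; have := t2.2
      exact Fin.ext (by omega)
  · intro t1 t2 ht
    dsimp only
    by_cases h2 : (t2:ℕ) < m+1
    · have h1 : (t1:ℕ) < m+1 := by omega
      rw [dif_pos h1, dif_pos h2]
      exact hg.2 _ _ (by simp [ht])
    · have h1v : (t1:ℕ) = m := by have := t1.2; omega
      have h1 : (t1:ℕ) < m+1 := by omega
      rw [dif_pos h1, dif_neg h2]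
      have he : (⟨(t1:ℕ), h1⟩ : Fin (m+1)) = Fin.last m := Fin.ext (by simp [h1v])
      rw [he]
      exact hab
  · dsimp only
    rw [dif_neg (by simp)]

lemma level_le_on_chain (hasym : ∀ a b, D a b → ¬ D b a) (hFD : ∀ a b, F a b → D a b)
    (hac : (underlyingGraph F).IsAcyclic) {n : ℕ} {c : Fin (n+1) → V} (hc : IsDirChain F c)
    (hmax : ∀ m, EndsAt F m (c (Fin.last n)) → m ≤ n) :
    ∀ (t : Fin (n+1)) (m : ℕ), EndsAt F m (c t) → m ≤ (t:ℕ) := by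
  have key : ∀ (d : ℕ) (t : Fin (n+1)), (t:ℕ) + d = n → ∀ m, EndsAt F m (c t) →
      EndsAt F (m+d) (c (Fin.last n)) := by
    intro d
    induction d with
    | zero =>
      intro t ht m hm
      have he : t = Fin.last n := Fin.ext (by simpa using ht)
      rw [← he]; exact hm
    | succ d ih =>
      intro t ht m hm
      have h1 : (t:ℕ) + 1 < n + 1 := by omega
      have hedge : F (c t) (c ⟨(t:ℕ)+1, h1⟩) := hc.2 _ _ rfl
      have h3 := endsAt_succ hasym hFD hac hedge hm
      have h4 := ih ⟨(t:ℕ)+1, h1⟩ (by simp; omega) (m+1) h3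
      have harith : m + 1 + d = m + (d+1) := by omega
      rwa [harith] at h4
  intro t m hm
  have h5 := hmax (m + (n - t.1)) (key (n - t.1) t (by have := t.2; omega) m hm)
  have := t.2
  omega

end Aux

theorem stmt_11 {V : Type*} (D F : V → V → Prop)
    (hasym : ∀ a b, D a b → ¬ D b a)
    (hF : IsMaxSpanningOutForest D F)
    (v w : V) (hvw : D v w) (k l i j : ℕ)
    (hi : LevelIs F v i) (hj : LevelIs F w j)
    (h1 : k < j) (h2 : j + l ≤ i) :
    HasTwoBlockPath D k l := by
  obtain ⟨hFD, ⟨hindeg, hac⟩, hmaxF⟩ := hF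
  obtain ⟨hi1, hiv, hiMax⟩ := hi
  obtain ⟨hj1, hjw, hjMax⟩ := hj
  obtain ⟨jv, rfl⟩ : ∃ jv, j = jv + 1 := ⟨j - 1, by omega⟩
  obtain ⟨iv, rfl⟩ : ∃ iv, i = iv + 1 := ⟨i - 1, by omega⟩
  simp only [Nat.add_sub_cancel] at hjw hiv
  obtain ⟨cw, hcw, hcwlast⟩ := hjw
  obtain ⟨cv, hcv, hcvlast⟩ := hiv
  have hkj : k ≤ jv := by omega
  have hjl : jv + l ≤ iv := by omega
  -- levels on the chain ending at w are exact
  have hwmax : ∀ m, EndsAt F m (cw (Fin.last jv)) → m ≤ jv := by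
    intro m hm
    rw [hcwlast] at hm
    have := hjMax m hm
    omega
  have hcwle := level_le_on_chain hasym hFD hac hcw hwmax
  -- the two-block path
  refine ⟨fun t => if h : (t:ℕ) ≤ k then cw ⟨jv - k + t.1, by omega⟩
      else cv ⟨iv + k + 1 - t.1, by omega⟩, ?_, ?_, ?_⟩
  · -- injectivity
    intro t1 t2 he
    dsimp only at he
    have hb1 := t1.2
    have hb2 := t2.2
    by_cases hh1 : (t1:ℕ) ≤ k <;> by_cases hh2 : (t2:ℕ) ≤ k
    · rw [dif_pos hh1, dif_pos hh2] at he
      have h3 := congrArg Fin.val (hcw.1 he)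
      simp only [] at h3
      exact Fin.ext (by omega)
    · rw [dif_pos hh1, dif_neg hh2] at he
      exfalso
      have hpre := chain_prefix hcv (⟨iv + k + 1 - t2.1, by omega⟩ : Fin (iv + 1))
      rw [← he] at hpre
      have h4 := hcwle _ _ hpre
      simp only [] at h4
      omega
    · rw [dif_neg hh1, dif_pos hh2] at he
      exfalso
      have hpre := chain_prefix hcv (⟨iv + k + 1 - t1.1, by omega⟩ : Fin (iv + 1))
      rw [he] at hpre
      have h4 := hcwle _ _ hpre
      simp only [] at h4
      omega
    · rw [dif_neg hh1, dif_neg hh2] at he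
      have h3 := congrArg Fin.val (hcv.1 he)
      simp only [] at h3
      exact Fin.ext (by omega)
  · -- forward arcs
    intro t1 t2 ht hk
    dsimp only
    have hb2 := t2.2
    have hh1 : (t1:ℕ) ≤ k := by omega
    have hh2 : (t2:ℕ) ≤ k := by omega
    rw [dif_pos hh1, dif_pos hh2]
    exact hFD _ _ (hcw.2 _ _ (by simp only []; omega))
  · -- backward arcs
    intro t1 t2 ht hk
    dsimp only
    have hb2 := t2.2
    have hh2 : ¬ (t2:ℕ) ≤ k := by omega
    rw [dif_neg hh2]
    rcases Nat.eq_or_lt_of_le hk with hke | hke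
    · -- t1 = k : the arc v → w
      rw [dif_pos (le_of_eq hke.symm)]
      have e1 : cw ⟨jv - k + t1.1, by omega⟩ = w := by
        rw [← hcwlast]; exact congrArg cw (Fin.ext (by simp only [Fin.val_last]; omega))
      have e2 : cv ⟨iv + k + 1 - t2.1, by omega⟩ = v := by
        rw [← hcvlast]; exact congrArg cv (Fin.ext (by simp only [Fin.val_last]; omega))
      rw [e1, e2]
      exact hvw
    · -- t1 > k : inside the chain ending at v
      have hh1 : ¬ (t1:ℕ) ≤ k := by omega
      rw [dif_neg hh1]
      exact hFD _ _ (hcv.2 _ _ (by simp only []; omega))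
end

section
/- In a maximal spanning out-forest F of a digraph D, each level set L_i = {v : l_F(v) = i} is an independent set of D. -/
/-- Build a walk in a simple graph from a chain of adjacent vertices. -/
lemma exists_chain_walk {V : Type*} (G : SimpleGraph V) :
    ∀ (n : ℕ) (f : Fin (n + 1) → V),
    (∀ i j : Fin (n + 1), (j : ℕ) = (i : ℕ) + 1 → G.Adj (f i) (f j)) →
    ∃ w : G.Walk (f 0) (f (Fin.last n)), w.support = List.ofFn f := by
  intro n
  induction n with
  | zero =>
    intro f _
    have h0 : f 0 = f (Fin.last 0) := congrArg f (Fin.ext (by simp))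
    exact ⟨(SimpleGraph.Walk.nil).copy rfl h0, by simp [List.ofFn_succ]⟩
  | succ n ih =>
    intro f hadj
    obtain ⟨w, hw⟩ := ih (f ∘ Fin.succ)
      (fun i j h => hadj i.succ j.succ (by simp [h]))
    have hlast : (f ∘ Fin.succ) (Fin.last n) = f (Fin.last (n + 1)) :=
      congrArg f (Fin.succ_last n)
    have hadj0 : G.Adj (f 0) ((f ∘ Fin.succ) 0) := hadj 0 (Fin.succ 0) (by simp)
    refine ⟨SimpleGraph.Walk.cons hadj0 (w.copy rfl hlast), ?_⟩
    simp only [SimpleGraph.Walk.support_cons, SimpleGraph.Walk.support_copy, hw]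
    simp [List.ofFn_succ, Function.comp]

/-- A directed cycle of length ≥ 3 contradicts acyclicity of the underlying graph. -/
lemma no_dir_cycle {V : Type*} {F : V → V → Prop}
    (hac : (underlyingGraph F).IsAcyclic) {m : ℕ} (hm : 2 ≤ m)
    (f : Fin (m + 1) → V) (hinj : Function.Injective f)
    (harc : ∀ i j : Fin (m + 1), (j : ℕ) = (i : ℕ) + 1 → F (f i) (f j))
    (hback : F (f (Fin.last m)) (f 0)) : False := by
  set G := underlyingGraph F with hG
  have hadjchain : ∀ i j : Fin (m + 1), (j : ℕ) = (i : ℕ) + 1 → G.Adj (f i) (f j) := by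
    intro i j h
    refine ⟨hinj.ne ?_, Or.inl (harc i j h)⟩
    intro e; rw [e] at h; omega
  obtain ⟨w, hw⟩ := exists_chain_walk G m f hadjchain
  have hpath : w.IsPath := by
    rw [SimpleGraph.Walk.isPath_def, hw]
    exact List.nodup_ofFn.mpr hinj
  have hne : f 0 ≠ f (Fin.last m) := by
    intro e
    have := hinj e
    simp [Fin.ext_iff, Fin.last] at this
    omega
  have hadj : G.Adj (f 0) (f (Fin.last m)) := ⟨hne, Or.inr hback⟩
  have huniq := SimpleGraph.isAcyclic_iff_path_unique.mp hac
    (⟨w, hpath⟩ : G.Path (f 0) (f (Fin.last m))) (SimpleGraph.Path.singleton hadj)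
  have hsup := congrArg (fun p : G.Path (f 0) (f (Fin.last m)) => p.1.support.length) huniq
  simp only [SimpleGraph.Path.singleton, hw, List.length_ofFn] at hsup
  simp [SimpleGraph.Walk.support_cons] at hsup
  omega

/-- Extension lemma: a longest-style path ending at `x` extends along an arc `x → y`. -/
lemma ends_ext {V : Type*} {F : V → V → Prop}
    (hin : ∀ a b c, F a c → F b c → a = b)
    (hac : (underlyingGraph F).IsAcyclic)
    (hno2 : ∀ a b, F a b → ¬ F b a)
    (hirr : ∀ a, ¬ F a a)
    {x y : V} {m : ℕ} (hxy : F x y) (h : EndsAt F m x) : EndsAt F (m + 1) y := by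
  obtain ⟨f, ⟨finj, farc⟩, hfx⟩ := h
  have hy : ∀ k : Fin (m + 1), f k ≠ y := by
    intro k hk
    rcases Nat.eq_zero_or_pos k.val with h0 | hpos
    · have hk0 : k = 0 := Fin.ext (by simpa using h0)
      subst hk0
      match m, f, finj, farc, hfx, hk with
      | 0, f, finj, farc, hfx, hk =>
        have hxy' : x = y := by
          rw [← hfx, ← hk]; exact congrArg f (Fin.ext (by simp))
        exact hirr y (hxy' ▸ hxy)
      | 1, f, finj, farc, hfx, hk =>
        have h01 : F (f 0) (f 1) := farc 0 1 (by decide)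
        have h10 : F (f 1) (f 0) := by
          have hl : (Fin.last 1) = (1 : Fin 2) := by decide
          rw [← hk, ← hfx, hl] at hxy
          exact hxy
        exact hno2 _ _ h01 h10
      | (n + 2), f, finj, farc, hfx, hk =>
        exact no_dir_cycle hac (by omega) f finj farc (by rw [hfx, hk]; exact hxy)
    · obtain ⟨j, hj⟩ : ∃ j, k.val = j + 1 := ⟨k.val - 1, by omega⟩
      have hjlt : j < m + 1 := by omega
      have harc' : F (f ⟨j, hjlt⟩) (f k) := farc ⟨j, hjlt⟩ k hj
      have hxfk : F x (f k) := by rw [hk]; exact hxy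
      have heq : f ⟨j, hjlt⟩ = x := hin _ _ _ harc' hxfk
      have hjm : (⟨j, hjlt⟩ : Fin (m + 1)) = Fin.last m := finj (heq.trans hfx.symm)
      have : j = m := by simpa [Fin.ext_iff, Fin.last] using hjm
      have := k.isLt
      omega
  refine ⟨Fin.snoc f y, ⟨?_, ?_⟩, by simp⟩
  · intro a b hab
    induction a using Fin.lastCases with
    | last =>
      induction b using Fin.lastCases with
      | last => rfl
      | cast b =>
        rw [Fin.snoc_last, Fin.snoc_castSucc] at hab
        exact absurd hab.symm (hy b)
    | cast a =>
      induction b using Fin.lastCases with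
      | last =>
        rw [Fin.snoc_last, Fin.snoc_castSucc] at hab
        exact absurd hab (hy a)
      | cast b =>
        rw [Fin.snoc_castSucc, Fin.snoc_castSucc] at hab
        exact congrArg Fin.castSucc (finj hab)
  · intro i j hji
    by_cases hj : (j : ℕ) < m + 1
    · have hi : (i : ℕ) < m + 1 := by omega
      set i' : Fin (m + 1) := ⟨i, hi⟩
      set j' : Fin (m + 1) := ⟨j, hj⟩
      have hgi : (Fin.snoc f y : Fin (m + 2) → V) i = f i' := by
        rw [show i = Fin.castSucc i' from Fin.ext rfl]
        simp
      have hgj : (Fin.snoc f y : Fin (m + 2) → V) j = f j' := by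
        rw [show j = Fin.castSucc j' from Fin.ext rfl]
        simp
      rw [hgi, hgj]
      exact farc i' j' hji
    · have hjv : (j : ℕ) = m + 1 := by have := j.isLt; omega
      have hiv : (i : ℕ) = m := by omega
      have hjl : j = Fin.last (m + 1) := Fin.ext (by simpa using hjv)
      have hil : i = Fin.castSucc (Fin.last m) := Fin.ext (by simpa using hiv)
      rw [hjl, hil, Fin.snoc_last, Fin.snoc_castSucc, hfx]
      exact hxy

theorem stmt_13 {V : Type*} (D F : V → V → Prop)
    (hasym : ∀ a b, D a b → ¬ D b a)
    (hF : IsMaxSpanningOutForest D F) :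
    ∀ (i : ℕ) (u v : V), LevelIs F u i → LevelIs F v i → u ≠ v → ¬ D u v := by
  intro i u v hu hv huv hD
  obtain ⟨hsub, ⟨hin, hac⟩, hmax⟩ := hF
  have hno2 : ∀ a b, F a b → ¬ F b a := fun a b h1 h2 =>
    hasym _ _ (hsub _ _ h1) (hsub _ _ h2)
  have hirr : ∀ a, ¬ F a a := fun a h => hasym a a (hsub _ _ h) (hsub _ _ h)
  obtain ⟨N, g, hchain, hg0, hgN⟩ := hmax u v hD i i hu hv le_rfl
  have key : ∀ k : Fin (N + 1), EndsAt F (i - 1 + (k : ℕ)) (g k) := by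
    intro k
    induction k using Fin.induction with
    | zero => simpa [hg0] using hv.2.1
    | succ k ih =>
      have harc : F (g k.castSucc) (g k.succ) := hchain.2 _ _ (by simp)
      have := ends_ext hin hac hno2 hirr harc ih
      simpa [Nat.add_assoc] using this
  have hlast : EndsAt F (i - 1 + N) u := by
    have := key (Fin.last N)
    rwa [hgN] at this
  have hle := hu.2.2 _ hlast
  have hi1 := hu.1
  have hN : N = 0 := by omega
  subst hN
  exact huv (by rw [← hgN, ← hg0]; exact congrArg g (Fin.ext (by simp)))
end

section
/- (El-Sahili–Kouider) Every digraph whose underlying graph has chromatic number at least k + l + 2 contains a path with two blocks P(k, l). -/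
/-- A path with two blocks read backwards is a path with two blocks with the
block lengths exchanged. -/
private lemma twoBlock_symm {V : Type*} {D : V → V → Prop} {a b : ℕ}
    (h : HasTwoBlockPath D a b) : HasTwoBlockPath D b a := by
  obtain ⟨f, hinj, hfwd, hbwd⟩ := h
  refine ⟨fun i => f ⟨a + b - (i : ℕ), by omega⟩, ?_, ?_, ?_⟩
  · intro i j hij
    have hi := i.isLt
    have hj := j.isLt
    have h2 : a + b - (i : ℕ) = a + b - (j : ℕ) := by
      have := hinj hij
      exact congrArg Fin.val this
    exact Fin.ext (by omega)
  · intro i j hj hib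
    have hj2 := j.isLt
    show D (f ⟨a + b - (i : ℕ), by omega⟩) (f ⟨a + b - (j : ℕ), by omega⟩)
    have hji : (⟨a + b - (j : ℕ), by omega⟩ : Fin (a + b + 1)) =
        ⟨a + b - (i : ℕ) - 1, by omega⟩ := by
      apply Fin.ext
      show a + b - (j : ℕ) = a + b - (i : ℕ) - 1
      omega
    rw [hji]
    exact hbwd ⟨a + b - (i : ℕ) - 1, by omega⟩ ⟨a + b - (i : ℕ), by omega⟩
      (by show a + b - (i : ℕ) = a + b - (i : ℕ) - 1 + 1; omega)
      (by show a ≤ a + b - (i : ℕ) - 1; omega)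
  · intro i j hj hib
    have hj2 := j.isLt
    show D (f ⟨a + b - (j : ℕ), by omega⟩) (f ⟨a + b - (i : ℕ), by omega⟩)
    have hji : (⟨a + b - (j : ℕ), by omega⟩ : Fin (a + b + 1)) =
        ⟨a + b - (i : ℕ) - 1, by omega⟩ := by
      apply Fin.ext
      show a + b - (j : ℕ) = a + b - (i : ℕ) - 1
      omega
    rw [hji]
    exact hfwd ⟨a + b - (i : ℕ) - 1, by omega⟩ ⟨a + b - (i : ℕ), by omega⟩
      (by show a + b - (i : ℕ) = a + b - (i : ℕ) - 1 + 1; omega)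
      (by show a + b - (i : ℕ) - 1 < a; omega)

/-- Existence of a level structure: a level function `ℓ` such that adjacent
(in `D`) vertices have distinct levels, together with an "exact predecessor"
function `p` decreasing the level by exactly one along arcs of `D`. -/
private lemma exists_level_structure {V : Type*} [Fintype V] (D : V → V → Prop) :
    ∃ (ℓ : V → ℕ) (p : V → V),
      (∀ u v : V, u ≠ v → D u v → ℓ u ≠ ℓ v) ∧
      (∀ v : V, 0 < ℓ v → D (p v) v ∧ ℓ (p v) + 1 = ℓ v) := by
  classical
  -- the collection of acyclic subrelations of D, as finsets of pairs
  let P : Finset (V × V) → Prop := fun E =>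
    (∀ q ∈ E, D q.1 q.2) ∧ Irreflexive (Relation.TransGen (fun a b => (a, b) ∈ E))
  have hPfin : ({E | P E} : Set (Finset (V × V))).Finite := Set.toFinite _
  have hPne : ({E | P E} : Set (Finset (V × V))).Nonempty := by
    refine ⟨∅, ⟨by simp, ?_⟩⟩
    have hgen : ∀ x y : V,
        Relation.TransGen (fun a b => (a, b) ∈ (∅ : Finset (V × V))) x y → False := by
      intro x y h
      induction h with
      | single h => simp at h
      | tail _ h _ => simp at h
    exact fun x hx => hgen x x hx
  obtain ⟨E, hE, hEmax⟩ :=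
    Set.Finite.exists_maximalFor Finset.card {E | P E} hPfin hPne
  have hEP : P E := hE
  let e : V → V → Prop := fun a b => (a, b) ∈ E
  have hsub : ∀ a b, e a b → D a b := fun a b h => hEP.1 (a, b) h
  have hacy : Irreflexive (Relation.TransGen e) := hEP.2
  -- maximality: any D-arc is connected by a TransGen of e in one direction
  have hP2 : ∀ u v, u ≠ v → D u v →
      Relation.TransGen e u v ∨ Relation.TransGen e v u := by
    intro u v huv hD
    by_cases he : e u v
    · exact Or.inl (Relation.TransGen.single he)
    by_contra hcon
    push_neg at hcon
    obtain ⟨h1, h2⟩ := hcon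
    have hPE' : P (insert (u, v) E) := by
      constructor
      · intro q hq
        rcases Finset.mem_insert.mp hq with h | h
        · rw [h]; exact hD
        · exact hEP.1 q h
      · intro x hx
        have key : ∀ {y z : V},
            Relation.TransGen (fun a b => (a, b) ∈ insert (u, v) E) y z →
            Relation.TransGen e y z ∨
              (Relation.ReflTransGen e y u ∧ Relation.ReflTransGen e v z) := by
          intro y z h
          induction h with
          | single h =>
            rcases Finset.mem_insert.mp h with h | h
            · have h1' : (_, _) = ((u : V), (v : V)) := h
              rw [Prod.mk.injEq] at h1'
              right
              rw [h1'.1, h1'.2]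
              exact ⟨Relation.ReflTransGen.refl, Relation.ReflTransGen.refl⟩
            · exact Or.inl (Relation.TransGen.single h)
          | tail _ h ih =>
            rcases Finset.mem_insert.mp h with h | h
            · have h1' : (_, _) = ((u : V), (v : V)) := h
              rw [Prod.mk.injEq] at h1'
              rcases ih with hl | ⟨hyu, hvb⟩
              · right
                refine ⟨?_, h1'.2 ▸ Relation.ReflTransGen.refl⟩
                exact h1'.1 ▸ hl.to_reflTransGen
              · right
                exact ⟨hyu, h1'.2 ▸ Relation.ReflTransGen.refl⟩
            · rcases ih with hl | ⟨hyu, hvb⟩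
              · exact Or.inl (hl.tail h)
              · exact Or.inr ⟨hyu, hvb.tail h⟩
        rcases key hx with hl | ⟨hxu, hvx⟩
        · exact hacy x hl
        · have hvu : Relation.ReflTransGen e v u := hvx.trans hxu
          rcases (Relation.reflTransGen_iff_eq_or_transGen.mp hvu) with h | h
          · exact huv h
          · exact h2 h
    have hnotmem : (u, v) ∉ E := he
    have hcard := hEmax hPE' (Finset.card_le_card (Finset.subset_insert _ _))
    rw [Finset.card_insert_of_notMem hnotmem] at hcard
    omega
  -- well-foundedness of e
  haveI : IsTrans V (Relation.TransGen e) := ⟨fun _ _ _ h1 h2 => h1.trans h2⟩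
  haveI : IsIrrefl V (Relation.TransGen e) := ⟨hacy⟩
  have hwf' : WellFounded (Relation.TransGen e) :=
    Finite.wellFounded_of_trans_of_irrefl _
  have hwf : WellFounded e :=
    Subrelation.wf (fun {a b} h => Relation.TransGen.single h) hwf'
  -- the level function
  let F : (v : V) → ((u : V) → e u v → ℕ) → ℕ := fun v ih =>
    (Finset.univ.filter (fun u => e u v)).attach.sup
      (fun u => ih u.1 (Finset.mem_filter.mp u.2).2 + 1)
  let ℓ : V → ℕ := fun v => hwf.fix F v
  have hℓeq : ∀ v, ℓ v = (Finset.univ.filter (fun u => e u v)).attach.sup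
      (fun u => ℓ u.1 + 1) := by
    intro v
    exact hwf.fix_eq F v
  have hL1 : ∀ u v, e u v → ℓ u + 1 ≤ ℓ v := by
    intro u v h
    rw [hℓeq v]
    have hmem : u ∈ Finset.univ.filter (fun u => e u v) :=
      Finset.mem_filter.mpr ⟨Finset.mem_univ _, h⟩
    exact Finset.le_sup (f := fun u => ℓ u.1 + 1) (Finset.mem_attach _ ⟨u, hmem⟩)
  have hL2 : ∀ u v, Relation.TransGen e u v → ℓ u < ℓ v := by
    intro u v h
    induction h with
    | single h => have := hL1 _ _ h; omega
    | tail _ h ih => have := hL1 _ _ h; omega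
  have hL3 : ∀ u v : V, u ≠ v → D u v → ℓ u ≠ ℓ v := by
    intro u v hne hD
    rcases hP2 u v hne hD with h | h
    · exact (hL2 _ _ h).ne
    · exact (hL2 _ _ h).ne'
  have hL4 : ∀ v, 0 < ℓ v → ∃ u, e u v ∧ ℓ u + 1 = ℓ v := by
    intro v hv
    have hne : ((Finset.univ.filter (fun u => e u v)).attach).Nonempty := by
      by_contra h
      rw [Finset.not_nonempty_iff_eq_empty] at h
      rw [hℓeq v, h] at hv
      simp at hv
    obtain ⟨b, _, hb⟩ := Finset.exists_mem_eq_sup _ hne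
      (fun u : {x // x ∈ Finset.univ.filter (fun u => e u v)} => ℓ u.1 + 1)
    refine ⟨b.1, (Finset.mem_filter.mp b.2).2, ?_⟩
    rw [hℓeq v, hb]
  refine ⟨ℓ, fun v => if h : 0 < ℓ v then (hL4 v h).choose else v, hL3, ?_⟩
  intro v hv
  show D (if h : 0 < ℓ v then (hL4 v h).choose else v) v ∧
    ℓ (if h : 0 < ℓ v then (hL4 v h).choose else v) + 1 = ℓ v
  rw [dif_pos hv]
  obtain ⟨h1, h2⟩ := (hL4 v hv).choose_spec
  exact ⟨hsub _ _ h1, h2⟩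

private lemma chain_level {V : Type*} {D : V → V → Prop} {ℓ : V → ℕ} {p : V → V}
    (hp : ∀ v : V, 0 < ℓ v → D (p v) v ∧ ℓ (p v) + 1 = ℓ v) (v : V) :
    ∀ j, j ≤ ℓ v → ℓ (p^[j] v) + j = ℓ v := by
  intro j
  induction j with
  | zero => simp
  | succ n ih =>
    intro hn
    have h1 := ih (by omega)
    have h2 : 0 < ℓ (p^[n] v) := by omega
    have h3 := (hp _ h2).2
    rw [Function.iterate_succ_apply']
    omega

private lemma chain_arc {V : Type*} {D : V → V → Prop} {ℓ : V → ℕ} {p : V → V}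
    (hp : ∀ v : V, 0 < ℓ v → D (p v) v ∧ ℓ (p v) + 1 = ℓ v) (v : V) :
    ∀ m, m + 1 ≤ ℓ v → D (p^[m+1] v) (p^[m] v) := by
  intro m hm
  have h1 := chain_level hp v m (by omega)
  have h2 : 0 < ℓ (p^[m] v) := by omega
  rw [Function.iterate_succ_apply']
  exact (hp _ h2).1

/-- The key construction: an arc `u → v` whose two chain "windows" of levels
are disjoint yields a path with two blocks: the forward block is a chain
suffix descending into `v`, the backward block is the arc `u → v` followed by
the chain into `u`. -/
private lemma build_two_block {V : Type*} {D : V → V → Prop} {ℓ : V → ℕ} {p : V → V}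
    (hp : ∀ v : V, 0 < ℓ v → D (p v) v ∧ ℓ (p v) + 1 = ℓ v) {u v : V} {a b : ℕ}
    (hD : D u v) (hb : 1 ≤ b) (hav : a ≤ ℓ v) (hbu : b ≤ ℓ u + 1)
    (hw : ℓ v + b ≤ ℓ u ∨ ℓ u + a < ℓ v) :
    HasTwoBlockPath D a b := by
  refine ⟨fun i => if (i : ℕ) ≤ a then p^[a - (i : ℕ)] v
    else p^[(i : ℕ) - a - 1] u, ?_, ?_, ?_⟩
  · intro i j hij
    have hi := i.isLt
    have hj := j.isLt
    simp only at hij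
    by_cases h1 : (i : ℕ) ≤ a <;> by_cases h2 : (j : ℕ) ≤ a
    · rw [if_pos h1, if_pos h2] at hij
      have e1 := chain_level hp v (a - (i : ℕ)) (by omega)
      have e2 := chain_level hp v (a - (j : ℕ)) (by omega)
      rw [hij] at e1
      exact Fin.ext (by omega)
    · rw [if_pos h1, if_neg h2] at hij
      have e1 := chain_level hp v (a - (i : ℕ)) (by omega)
      have e2 := chain_level hp u ((j : ℕ) - a - 1) (by omega)
      rw [hij] at e1
      exfalso; omega
    · rw [if_neg h1, if_pos h2] at hij
      have e1 := chain_level hp u ((i : ℕ) - a - 1) (by omega)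
      have e2 := chain_level hp v (a - (j : ℕ)) (by omega)
      rw [hij] at e1
      exfalso; omega
    · rw [if_neg h1, if_neg h2] at hij
      have e1 := chain_level hp u ((i : ℕ) - a - 1) (by omega)
      have e2 := chain_level hp u ((j : ℕ) - a - 1) (by omega)
      rw [hij] at e1
      exact Fin.ext (by omega)
  · intro i j hj hia
    have hj2 := j.isLt
    have h1 : (i : ℕ) ≤ a := by omega
    have h2 : (j : ℕ) ≤ a := by omega
    simp only [if_pos h1, if_pos h2]
    have harc := chain_arc hp v (a - (j : ℕ)) (by omega)
    have heq : a - (j : ℕ) + 1 = a - (i : ℕ) := by omega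
    rw [heq] at harc
    exact harc
  · intro i j hj hka
    have hj2 := j.isLt
    by_cases hia : (i : ℕ) = a
    · have h1 : (i : ℕ) ≤ a := le_of_eq hia
      have h2 : ¬ (j : ℕ) ≤ a := by omega
      simp only [if_pos h1, if_neg h2]
      have hi0 : a - (i : ℕ) = 0 := by omega
      have hj0 : (j : ℕ) - a - 1 = 0 := by omega
      rw [hi0, hj0]
      simpa using hD
    · have h1 : ¬ (i : ℕ) ≤ a := by omega
      have h2 : ¬ (j : ℕ) ≤ a := by omega
      simp only [if_neg h1, if_neg h2]
      have harc := chain_arc hp u ((i : ℕ) - a - 1) (by omega)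
      have heq : (i : ℕ) - a - 1 + 1 = (j : ℕ) - a - 1 := by omega
      rw [heq] at harc
      exact harc

/-- A single chain suffix of length `k` gives `P(k, 0)`. -/
private lemma build_one_block {V : Type*} {D : V → V → Prop} {ℓ : V → ℕ} {p : V → V}
    (hp : ∀ v : V, 0 < ℓ v → D (p v) v ∧ ℓ (p v) + 1 = ℓ v) {v : V} {k : ℕ}
    (hk : k ≤ ℓ v) : HasTwoBlockPath D k 0 := by
  refine ⟨fun i => p^[k - (i : ℕ)] v, ?_, ?_, ?_⟩
  · intro i j hij
    have hi := i.isLt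
    have hj := j.isLt
    simp only at hij
    have e1 := chain_level hp v (k - (i : ℕ)) (by omega)
    have e2 := chain_level hp v (k - (j : ℕ)) (by omega)
    rw [hij] at e1
    exact Fin.ext (by omega)
  · intro i j hj hik
    have harc := chain_arc hp v (k - (j : ℕ)) (by omega)
    have heq : k - (j : ℕ) + 1 = k - (i : ℕ) := by omega
    rw [heq] at harc
    exact harc
  · intro i j hj hik
    have hj2 := j.isLt
    exact absurd hj (by omega)

/-- Main lemma: if `l ≤ k` and `D` has no `P(k,l)`, then the underlying graph
of `D` can be properly coloured with `k + l + 1` colours. -/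
private lemma key_colorable {V : Type*} [Fintype V] (D : V → V → Prop) (k l : ℕ)
    (hlk : l ≤ k) (hno : ¬ HasTwoBlockPath D k l) :
    (underlyingGraph D).Colorable (k + l + 1) := by
  classical
  obtain ⟨ℓ, p, hL3, hp⟩ := exists_level_structure D
  rcases Nat.eq_zero_or_pos l with hl0 | hl1
  · subst hl0
    rcases Nat.eq_zero_or_pos k with hk0 | hk1
    · subst hk0
      by_cases hV : Nonempty V
      · exfalso
        apply hno
        refine ⟨fun _ => Classical.arbitrary V,
          fun i j _ => Fin.ext (by have := i.isLt; have := j.isLt; omega),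
          ?_, ?_⟩
        · intro i j _ h2
          exact absurd h2 (by omega)
        · intro i j h1 _
          have := j.isLt
          have := i.isLt
          exact absurd h1 (by omega)
      · haveI : IsEmpty V := not_nonempty_iff.mp hV
        exact ⟨SimpleGraph.Coloring.mk isEmptyElim (fun {a b} _ => isEmptyElim a)⟩
    · -- k ≥ 1, l = 0 : all levels are < k, colour by level
      have hall : ∀ v, ℓ v < k := by
        intro v
        by_contra h
        push_neg at h
        exact hno (build_one_block hp h)
      refine ⟨SimpleGraph.Coloring.mk
        (fun v => (⟨ℓ v, by have := hall v; omega⟩ : Fin (k + 0 + 1))) ?_⟩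
      intro x y hadj
      obtain ⟨hne, hor⟩ : x ≠ y ∧ (D x y ∨ D y x) := hadj
      have hxy : ℓ x ≠ ℓ y := by
        rcases hor with h | h
        · exact hL3 x y hne h
        · exact (hL3 y x hne.symm h).symm
      simp only [Ne, Fin.mk.injEq]
      exact hxy
  · -- main case : 1 ≤ l ≤ k
    refine ⟨SimpleGraph.Coloring.mk
      (fun v => if _ : ℓ v < l then (⟨ℓ v, by omega⟩ : Fin (k + l + 1))
        else ⟨l + (ℓ v - l) % (k + 1),
          by have := Nat.mod_lt (ℓ v - l) (y := k + 1) (by omega); omega⟩) ?_⟩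
    have hmain : ∀ x y : V, x ≠ y → D x y →
        (if _ : ℓ x < l then (⟨ℓ x, by omega⟩ : Fin (k + l + 1))
          else ⟨l + (ℓ x - l) % (k + 1),
            by have := Nat.mod_lt (ℓ x - l) (y := k + 1) (by omega); omega⟩) ≠
        (if _ : ℓ y < l then (⟨ℓ y, by omega⟩ : Fin (k + l + 1))
          else ⟨l + (ℓ y - l) % (k + 1),
            by have := Nat.mod_lt (ℓ y - l) (y := k + 1) (by omega); omega⟩) := by
      intro x y hne hD
      have hℓne := hL3 x y hne hD
      by_cases hx : ℓ x < l <;> by_cases hy : ℓ y < l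
      · simp only [dif_pos hx, dif_pos hy, Ne, Fin.mk.injEq]
        exact hℓne
      · simp only [dif_pos hx, dif_neg hy, Ne, Fin.mk.injEq]
        omega
      · simp only [dif_neg hx, dif_pos hy, Ne, Fin.mk.injEq]
        omega
      · simp only [dif_neg hx, dif_neg hy, Ne, Fin.mk.injEq]
        intro heq
        have hmod : (ℓ x - l) % (k + 1) = (ℓ y - l) % (k + 1) := by omega
        rcases le_or_gt (ℓ x) (ℓ y) with hle | hlt
        · -- level gap at least k+1, increasing arc x → y
          have hdvd : (k + 1) ∣ (ℓ y - l) - (ℓ x - l) :=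
            (Nat.modEq_iff_dvd' (by omega)).mp hmod
          have heq2 : (ℓ y - l) - (ℓ x - l) = ℓ y - ℓ x := by omega
          rw [heq2] at hdvd
          have hpos : 0 < ℓ y - ℓ x := by omega
          have hge := Nat.le_of_dvd hpos hdvd
          -- ℓ y ≥ ℓ x + k + 1 : build P(k, l) with pivot y
          exact hno (build_two_block hp hD (by omega) (by omega) (by omega)
            (Or.inr (by omega)))
        · -- decreasing arc x → y with gap at least k+1 : build P(l, k)
          have hdvd : (k + 1) ∣ (ℓ x - l) - (ℓ y - l) :=
            (Nat.modEq_iff_dvd' (by omega)).mp hmod.symm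
          have heq2 : (ℓ x - l) - (ℓ y - l) = ℓ x - ℓ y := by omega
          rw [heq2] at hdvd
          have hpos : 0 < ℓ x - ℓ y := by omega
          have hge := Nat.le_of_dvd hpos hdvd
          have hlk2 : HasTwoBlockPath D l k :=
            build_two_block hp hD (by omega) (by omega) (by omega)
              (Or.inl (by omega))
          exact hno (twoBlock_symm hlk2)
    intro x y hadj
    obtain ⟨hne, hor⟩ : x ≠ y ∧ (D x y ∨ D y x) := hadj
    rcases hor with h | h
    · exact hmain x y hne h
    · exact (hmain y x hne.symm h).symm

/-- El-Sahili–Kouider. -/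
theorem stmt_14 {V : Type*} [Fintype V] (D : V → V → Prop)
    (hasym : ∀ a b, D a b → ¬ D b a) (k l : ℕ)
    (hchrom : ((k + l + 2 : ℕ) : ℕ∞) ≤ (underlyingGraph D).chromaticNumber) :
    HasTwoBlockPath D k l := by
  by_contra hno
  rcases le_total l k with hlk | hkl
  · have hcol := key_colorable D k l hlk hno
    have hle := hcol.chromaticNumber_le
    have hcontra : ((k + l + 2 : ℕ) : ℕ∞) ≤ ((k + l + 1 : ℕ) : ℕ∞) :=
      le_trans hchrom (by exact_mod_cast hle)
    have : k + l + 2 ≤ k + l + 1 := by exact_mod_cast hcontra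
    omega
  · have hno' : ¬ HasTwoBlockPath D l k := fun h => hno (twoBlock_symm h)
    have hcol := key_colorable D l k hkl hno'
    have hle := hcol.chromaticNumber_le
    have hcontra : ((k + l + 2 : ℕ) : ℕ∞) ≤ ((l + k + 1 : ℕ) : ℕ∞) :=
      le_trans hchrom (by exact_mod_cast hle)
    have : k + l + 2 ≤ l + k + 1 := by exact_mod_cast hcontra
    omega
end
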